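/- arXiv:1802.00160 — 6 statements merged into one kernel-verified Lean document; each statement's English description precedes it below -/
import Mathlib

section
/- Let a_1,...,a_K be real numbers in [0,1] and (λ_1,...,λ_K) a probability vector. If the sum of the a_k is at most K̃ for a nonnegative integer K̃ ≤ K, then the weighted sum ∑_k λ_k a_k is at most the maximum, over subsets X of {1,...,K} of cardinality K̃, of ∑_{k∈X} λ_k. -/
/-- If `a_1,…,a_K ∈ [0,1]`, `(λ_1,…,λ_K)` is a probability vector, and
`∑ a_k ≤ K̃` for a nonnegative integer `K̃ ≤ K`, then `∑ λ_k a_k` is at most the maximum,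
over subsets `X ⊆ {1,…,K}` with `|X| = K̃`, of `∑_{k∈X} λ_k` (the maximum being attained
by some such subset). -/
theorem stmt0 (K Kt : ℕ) (hK : Kt ≤ K) (a lam : Fin K → ℝ)
    (ha : ∀ k, a k ∈ Set.Icc (0 : ℝ) 1) (hlam : ∀ k, 0 ≤ lam k)
    (hlamsum : ∑ k, lam k = 1) (hasum : ∑ k, a k ≤ (Kt : ℝ)) :
    ∃ X : Finset (Fin K), X.card = Kt ∧
      (∀ Y : Finset (Fin K), Y.card = Kt → ∑ k ∈ Y, lam k ≤ ∑ k ∈ X, lam k) ∧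
      ∑ k, lam k * a k ≤ ∑ k ∈ X, lam k := by
  have hne : ((Finset.univ : Finset (Fin K)).powersetCard Kt).Nonempty := by
    obtain ⟨t, ht, htc⟩ := Finset.exists_subset_card_eq (s := (Finset.univ : Finset (Fin K))) (n := Kt)
      (by simpa using hK)
    exact ⟨t, Finset.mem_powersetCard.2 ⟨ht, htc⟩⟩
  obtain ⟨X, hXmem, hXmax⟩ := Finset.exists_max_image
    ((Finset.univ : Finset (Fin K)).powersetCard Kt) (fun Y => ∑ k ∈ Y, lam k) hne
  have hXcard : X.card = Kt := (Finset.mem_powersetCard.1 hXmem).2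
  have hmax : ∀ Y : Finset (Fin K), Y.card = Kt → ∑ k ∈ Y, lam k ≤ ∑ k ∈ X, lam k := by
    intro Y hY
    exact hXmax Y (Finset.mem_powersetCard.2 ⟨Finset.subset_univ _, hY⟩)
  refine ⟨X, hXcard, hmax, ?_⟩
  -- swap property: λ j ≤ λ i for i ∈ X, j ∉ X
  have hswap : ∀ i ∈ X, ∀ j ∉ X, lam j ≤ lam i := by
    intro i hi j hj
    have hj' : j ∉ X.erase i := fun h => hj (Finset.mem_of_mem_erase h)
    have hYcard : (insert j (X.erase i)).card = Kt := by
      rw [Finset.card_insert_of_notMem hj', Finset.card_erase_of_mem hi, hXcard]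
      have : 1 ≤ Kt := by
        rw [← hXcard]; exact Finset.card_pos.2 ⟨i, hi⟩
      omega
    have h1 := hmax _ hYcard
    rw [Finset.sum_insert hj'] at h1
    have h2 : ∑ k ∈ X.erase i, lam k + lam i = ∑ k ∈ X, lam k :=
      Finset.sum_erase_add _ _ hi
    linarith
  rcases Nat.eq_zero_or_pos Kt with h0 | hpos
  · -- Kt = 0 : all a k = 0
    have haz : ∀ k, a k = 0 := by
      intro k
      have h1 : a k ≤ ∑ j, a j :=
        Finset.single_le_sum (fun j _ => (ha j).1) (Finset.mem_univ k)
      have h2 : (Kt : ℝ) = 0 := by simp [h0]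
      exact le_antisymm (by linarith) (ha k).1
    have : ∑ k, lam k * a k = 0 := by
      apply Finset.sum_eq_zero; intro k _; simp [haz k]
    rw [this]
    exact Finset.sum_nonneg fun k _ => hlam k
  · have hXne : X.Nonempty := Finset.card_pos.1 (by omega)
    set m := X.inf' hXne lam with hm
    have hm1 : ∀ i ∈ X, m ≤ lam i := fun i hi => Finset.inf'_le _ hi
    have hm0 : 0 ≤ m := by
      obtain ⟨i, hi, hie⟩ := Finset.exists_mem_eq_inf' hXne lam
      rw [hm, hie]; exact hlam i
    have hm2 : ∀ j ∉ X, lam j ≤ m := fun j hj =>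
      Finset.le_inf' hXne _ fun i hi => hswap i hi j hj
    have hsplit : ∑ k, lam k * a k
        = ∑ k ∈ X, lam k * a k + ∑ k ∈ Xᶜ, lam k * a k :=
      (Finset.sum_add_sum_compl X _).symm
    have hasplit : ∑ k ∈ X, a k + ∑ k ∈ Xᶜ, a k = ∑ k, a k :=
      Finset.sum_add_sum_compl X _
    have h1 : ∑ k ∈ Xᶜ, lam k * a k ≤ m * ∑ k ∈ Xᶜ, a k := by
      rw [Finset.mul_sum]
      apply Finset.sum_le_sum
      intro j hj
      exact mul_le_mul_of_nonneg_right (hm2 j (by simpa using hj)) (ha j).1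
    have h2 : m * ∑ k ∈ Xᶜ, a k ≤ m * ((Kt : ℝ) - ∑ k ∈ X, a k) := by
      apply mul_le_mul_of_nonneg_left _ hm0
      linarith
    have h3 : m * ((Kt : ℝ) - ∑ k ∈ X, a k) = ∑ k ∈ X, m * (1 - a k) := by
      have h : ∑ k ∈ X, m * (1 - a k) = m * ∑ k ∈ X, (1 - a k) :=
        (Finset.mul_sum _ _ _).symm
      rw [h, Finset.sum_sub_distrib, Finset.sum_const, hXcard, nsmul_eq_mul, mul_one]
    have h4 : ∑ k ∈ X, (lam k * a k + m * (1 - a k)) ≤ ∑ k ∈ X, lam k := by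
      apply Finset.sum_le_sum
      intro i hi
      nlinarith [hm1 i hi, (ha i).1, (ha i).2, hlam i]
    rw [Finset.sum_add_distrib] at h4
    linarith
end

section
/- The number of symplectic self-dual subspaces of F_2^{2N} (i.e., N-dimensional subspaces C with C = C^⊥) equals ∏_{n=0}^{N-1}(2^{2N-n} - 2^n) / ∏_{n=0}^{N-1}(2^N - 2^n). -/
/-- `F_2^{2N}`, grouped into `N` blocks of two coordinates. -/
abbrev V (N : ℕ) := Fin N → ZMod 2 × ZMod 2

/-- The standard symplectic product `u ⊙ v = uᵀ P v` on `F_2^{2N}`, where `P` is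
block-diagonal with `N` antidiagonal `2×2` blocks. -/
def symp {N : ℕ} (u v : V N) : ZMod 2 :=
  ∑ n, ((u n).1 * (v n).2 + (u n).2 * (v n).1)

/-- The symplectic dual `C^⊥ = {u : ∀ v ∈ C, u ⊙ v = 0}` of a subspace `C ⊆ F_2^{2N}`. -/
def sympDual {N : ℕ} (C : Submodule (ZMod 2) (V N)) : Submodule (ZMod 2) (V N) where
  carrier := {u | ∀ v ∈ C, symp u v = 0}
  zero_mem' := by intro v hv; simp [symp]
  add_mem' := by
    intro a b ha hb v hv
    have h : symp (a + b) v = symp a v + symp b v := by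
      simp only [symp, ← Finset.sum_add_distrib]
      refine Finset.sum_congr rfl fun n _ => ?_
      simp [Prod.fst_add, Prod.snd_add]; ring
    rw [h, ha v hv, hb v hv, add_zero]
  smul_mem' := by
    intro c u hu v hv
    have h : symp (c • u) v = c * symp u v := by
      simp only [symp, Finset.mul_sum]
      refine Finset.sum_congr rfl fun n _ => ?_
      simp [Prod.smul_fst, Prod.smul_snd, smul_eq_mul]; ring
    rw [h, hu v hv, mul_zero]

open Submodule Module Set

section Aux

variable {N : ℕ}

lemma symp_comm (u v : V N) : symp u v = symp v u :=
  Finset.sum_congr rfl fun n _ => by ring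

lemma symp_self (u : V N) : symp u u = 0 := by
  refine Finset.sum_eq_zero fun n _ => ?_
  rw [mul_comm]
  exact CharTwo.add_self_eq_zero _

lemma symp_add_left (u v w : V N) : symp (u + v) w = symp u w + symp v w := by
  simp only [symp, ← Finset.sum_add_distrib]
  refine Finset.sum_congr rfl fun n _ => ?_
  simp only [Prod.fst_add, Prod.snd_add, Pi.add_apply]
  ring

lemma symp_smul_left (c : ZMod 2) (u v : V N) : symp (c • u) v = c * symp u v := by
  simp only [symp, Finset.mul_sum]
  refine Finset.sum_congr rfl fun n _ => ?_
  simp only [Pi.smul_apply, Prod.smul_fst, Prod.smul_snd, smul_eq_mul]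
  ring

/-- `symp` as a bilinear form. -/
def sympB (N : ℕ) : LinearMap.BilinForm (ZMod 2) (V N) :=
  LinearMap.mk₂ (ZMod 2) symp symp_add_left
    (fun c u v => by rw [symp_smul_left, smul_eq_mul])
    (fun u v w => by rw [symp_comm, symp_add_left, symp_comm v u, symp_comm w u])
    (fun c u v => by rw [symp_comm, symp_smul_left, symp_comm v u, smul_eq_mul])

@[simp] lemma sympB_apply (u v : V N) : sympB N u v = symp u v := rfl

lemma mem_sympDual {C : Submodule (ZMod 2) (V N)} {u : V N} :
    u ∈ sympDual C ↔ ∀ v ∈ C, symp u v = 0 := Iff.rfl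

lemma sympDual_eq_orthogonal (C : Submodule (ZMod 2) (V N)) :
    sympDual C = (sympB N).orthogonal C := by
  ext u
  rw [mem_sympDual, LinearMap.BilinForm.mem_orthogonal_iff]
  constructor
  · intro h v hv
    rw [sympB_apply, symp_comm]
    exact h v hv
  · intro h v hv
    have := h v hv
    rw [sympB_apply, symp_comm] at this
    exact this

lemma sympB_refl : (sympB N).IsRefl := fun u v h => by
  rw [sympB_apply, symp_comm]; exact h

lemma symp_single_right (x : V N) (n : Fin N) (a b : ZMod 2) :
    symp x (Pi.single n (a, b)) = (x n).1 * b + (x n).2 * a := by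
  rw [symp, Finset.sum_eq_single n]
  · rw [Pi.single_eq_same]
  · intro m _ hm
    rw [Pi.single_eq_of_ne hm]
    simp
  · intro h; exact absurd (Finset.mem_univ n) h

lemma sympB_nondeg : (sympB N).Nondegenerate := by
  have key : ∀ x : V N, (∀ y, sympB N x y = 0) → x = 0 := by
    intro x h
    funext n
    have h1 := h (Pi.single n ((0 : ZMod 2), 1))
    have h2 := h (Pi.single n ((1 : ZMod 2), 0))
    rw [sympB_apply, symp_single_right] at h1 h2
    simp only [mul_one, mul_zero, add_zero, zero_add] at h1 h2
    exact Prod.ext h1 h2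
  exact ⟨key, fun y h => key y fun x => by rw [sympB_apply, symp_comm]; exact h x⟩

lemma finrank_V : finrank (ZMod 2) (V N) = 2 * N := by
  rw [Module.finrank_pi_fintype]
  simp [Module.finrank_prod, Module.finrank_self, Finset.sum_const, mul_comm]

lemma card_submodule (W : Submodule (ZMod 2) (V N)) :
    Nat.card W = 2 ^ finrank (ZMod 2) W := by
  letI : Fintype W := Fintype.ofFinite W
  rw [Nat.card_eq_fintype_card, card_eq_pow_finrank (K := ZMod 2), ZMod.card]

lemma finrank_sympDual (W : Submodule (ZMod 2) (V N)) :
    finrank (ZMod 2) (sympDual W) = 2 * N - finrank (ZMod 2) W := by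
  rw [sympDual_eq_orthogonal, LinearMap.BilinForm.finrank_orthogonal sympB_nondeg,
    finrank_V]

lemma mem_sympDual_span {x : V N} {s : Set (V N)} (h : ∀ y ∈ s, symp x y = 0) :
    x ∈ sympDual (span (ZMod 2) s) := by
  rw [mem_sympDual]
  have hle : span (ZMod 2) s ≤ LinearMap.ker (sympB N x) := by
    rw [span_le]
    intro y hy
    rw [SetLike.mem_coe, LinearMap.mem_ker, sympB_apply]
    exact h y hy
  intro v hv
  have := hle hv
  rwa [LinearMap.mem_ker, sympB_apply] at this

lemma card_diff {W D : Submodule (ZMod 2) (V N)} (h : W ≤ D) :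
    Nat.card {x : V N // x ∈ D ∧ x ∉ W} = Nat.card D - Nat.card W := by
  have e : {x : V N // x ∈ D ∧ x ∉ W} ≃
      ((D : Set (V N)) \ (W : Set (V N)) : Set (V N)) :=
    Equiv.subtypeEquivRight (by intro x; simp [Set.mem_diff])
  rw [Nat.card_congr e, Nat.card_coe_set_eq, Set.ncard_diff h]
  simp [← Nat.card_coe_set_eq]

lemma card_eq_sum_fibers {α β : Type*} [Finite α] [Finite β] (f : α → β) :
    haveI : Fintype β := Fintype.ofFinite β
    Nat.card α = ∑ b : β, Nat.card {a // f a = b} := by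
  classical
  letI : Fintype β := Fintype.ofFinite β
  letI : Fintype α := Fintype.ofFinite α
  simp_rw [Nat.card_eq_fintype_card]
  rw [← Fintype.card_congr (Equiv.sigmaFiberEquiv f), Fintype.card_sigma]

end Aux

section Count

variable {N : ℕ}

/-- isotropic independent tuples -/
abbrev IsoT (N k : ℕ) :=
  {v : Fin k → V N // LinearIndependent (ZMod 2) v ∧ ∀ i j, symp (v i) (v j) = 0}

/-- independent tuples inside a submodule -/
abbrev BasT (N : ℕ) (C : Submodule (ZMod 2) (V N)) (k : ℕ) :=
  {v : Fin k → V N // LinearIndependent (ZMod 2) v ∧ ∀ i, v i ∈ C}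

lemma span_le_dual {k : ℕ} (v : Fin k → V N) (hv : ∀ i j, symp (v i) (v j) = 0) :
    span (ZMod 2) (Set.range v) ≤ sympDual (span (ZMod 2) (Set.range v)) := by
  rw [span_le]
  rintro x ⟨i, rfl⟩
  exact mem_sympDual_span (by rintro y ⟨j, rfl⟩; exact hv i j)

lemma finrank_span_tuple {k : ℕ} {v : Fin k → V N} (hv : LinearIndependent (ZMod 2) v) :
    finrank (ZMod 2) (span (ZMod 2) (Set.range v)) = k := by
  rw [finrank_span_eq_card hv, Fintype.card_fin]

/-- fiber of the "initial segment" map on isotropic tuples -/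
def isoFiberEquiv {k : ℕ} (w : IsoT N k) :
    {v : IsoT N (k + 1) // (⟨Fin.init v.1,
        (linearIndependent_fin_succ'.1 v.2.1).1,
        fun i j => v.2.2 _ _⟩ : IsoT N k) = w} ≃
      {x : V N // x ∈ sympDual (span (ZMod 2) (Set.range w.1)) ∧
        x ∉ span (ZMod 2) (Set.range w.1)} where
  toFun v := ⟨v.1.1 (Fin.last k), by
    have hw : Fin.init v.1.1 = w.1 := congrArg Subtype.val v.2
    constructor
    · rw [← hw]
      exact mem_sympDual_span (by rintro y ⟨i, rfl⟩; exact v.1.2.2 _ _)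
    · rw [← hw]
      exact (linearIndependent_fin_succ'.1 v.1.2.1).2⟩
  invFun x := ⟨⟨Fin.snoc w.1 x.1, by
      constructor
      · exact linearIndependent_fin_snoc.2 ⟨w.2.1, x.2.2⟩
      · intro i j
        refine Fin.lastCases ?_ ?_ i <;> [skip; intro i'] <;>
          refine Fin.lastCases ?_ ?_ j <;> try intro j'
        · simp only [Fin.snoc_last]; exact symp_self _
        · simp only [Fin.snoc_last, Fin.snoc_castSucc]
          exact x.2.1 _ (subset_span (Set.mem_range_self j'))
        · simp only [Fin.snoc_last, Fin.snoc_castSucc]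
          rw [symp_comm]
          exact x.2.1 _ (subset_span (Set.mem_range_self i'))
        · simp only [Fin.snoc_castSucc]; exact w.2.2 i' j'⟩,
    by
      apply Subtype.ext
      simp [Fin.init_snoc]⟩
  left_inv v := by
    apply Subtype.ext
    apply Subtype.ext
    have hw : w.1 = Fin.init v.1.1 := (congrArg Subtype.val v.2).symm
    simp only [hw]
    exact Fin.snoc_init_self v.1.1
  right_inv x := by
    apply Subtype.ext
    simp only [Fin.snoc_last]

lemma card_isoT_succ (k : ℕ) :
    Nat.card (IsoT N (k + 1)) = Nat.card (IsoT N k) * (2 ^ (2 * N - k) - 2 ^ k) := by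
  classical
  letI : Fintype (IsoT N k) := Fintype.ofFinite _
  have := card_eq_sum_fibers (α := IsoT N (k + 1)) (β := IsoT N k)
    (fun v => ⟨Fin.init v.1, (linearIndependent_fin_succ'.1 v.2.1).1, fun i j => v.2.2 _ _⟩)
  rw [this]
  have hfib : ∀ w : IsoT N k,
      Nat.card {v : IsoT N (k + 1) // (⟨Fin.init v.1,
        (linearIndependent_fin_succ'.1 v.2.1).1,
        fun i j => v.2.2 _ _⟩ : IsoT N k) = w} = 2 ^ (2 * N - k) - 2 ^ k := by
    intro w
    rw [Nat.card_congr (isoFiberEquiv w)]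
    have hle : span (ZMod 2) (Set.range w.1) ≤ sympDual (span (ZMod 2) (Set.range w.1)) :=
      span_le_dual w.1 w.2.2
    rw [card_diff hle, card_submodule, card_submodule, finrank_sympDual,
      finrank_span_tuple w.2.1]
  rw [Finset.sum_congr rfl (fun w _ => hfib w), Finset.sum_const, Finset.card_univ,
    smul_eq_mul, Nat.card_eq_fintype_card]

lemma card_isoT (k : ℕ) :
    Nat.card (IsoT N k) = ∏ n ∈ Finset.range k, (2 ^ (2 * N - n) - 2 ^ n) := by
  induction k with
  | zero =>
    rw [Finset.range_zero, Finset.prod_empty]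
    have : ∀ v : Fin 0 → V N, LinearIndependent (ZMod 2) v ∧ ∀ i j, symp (v i) (v j) = 0 :=
      fun v => ⟨linearIndependent_empty_type, fun i => i.elim0⟩
    haveI : Unique (IsoT N 0) :=
      ⟨⟨⟨default, this _⟩⟩, fun a => Subtype.ext (Subsingleton.elim _ _)⟩
    exact Nat.card_unique
  | succ k ih =>
    rw [card_isoT_succ, ih, Finset.prod_range_succ]

/-- fiber equiv for the basis-count recursion -/
def basFiberEquiv {C : Submodule (ZMod 2) (V N)} {k : ℕ} (w : BasT N C k) :
    {v : BasT N C (k + 1) // (⟨Fin.init v.1,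
        (linearIndependent_fin_succ'.1 v.2.1).1,
        fun i => v.2.2 _⟩ : BasT N C k) = w} ≃
      {x : V N // x ∈ C ∧ x ∉ span (ZMod 2) (Set.range w.1)} where
  toFun v := ⟨v.1.1 (Fin.last k), by
    have hw : Fin.init v.1.1 = w.1 := congrArg Subtype.val v.2
    exact ⟨v.1.2.2 _, by rw [← hw]; exact (linearIndependent_fin_succ'.1 v.1.2.1).2⟩⟩
  invFun x := ⟨⟨Fin.snoc w.1 x.1, by
      refine ⟨linearIndependent_fin_snoc.2 ⟨w.2.1, x.2.2⟩, ?_⟩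
      intro i
      refine Fin.lastCases ?_ ?_ i
      · simp only [Fin.snoc_last]; exact x.2.1
      · intro i'; simp only [Fin.snoc_castSucc]; exact w.2.2 i'⟩,
    by
      apply Subtype.ext
      simp [Fin.init_snoc]⟩
  left_inv v := by
    apply Subtype.ext
    apply Subtype.ext
    have hw : w.1 = Fin.init v.1.1 := (congrArg Subtype.val v.2).symm
    simp only [hw]
    exact Fin.snoc_init_self v.1.1
  right_inv x := by
    apply Subtype.ext
    simp only [Fin.snoc_last]

lemma span_le_of_basT {C : Submodule (ZMod 2) (V N)} {k : ℕ} (w : BasT N C k) :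
    span (ZMod 2) (Set.range w.1) ≤ C := by
  rw [span_le]; rintro x ⟨i, rfl⟩; exact w.2.2 i

lemma card_basT (C : Submodule (ZMod 2) (V N)) (k : ℕ) :
    Nat.card (BasT N C k) =
      ∏ n ∈ Finset.range k, (2 ^ finrank (ZMod 2) C - 2 ^ n) := by
  induction k with
  | zero =>
    rw [Finset.range_zero, Finset.prod_empty]
    have : ∀ v : Fin 0 → V N, LinearIndependent (ZMod 2) v ∧ ∀ i, v i ∈ C :=
      fun v => ⟨linearIndependent_empty_type, fun i => i.elim0⟩
    haveI : Unique (BasT N C 0) :=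
      ⟨⟨⟨default, this _⟩⟩, fun a => Subtype.ext (Subsingleton.elim _ _)⟩
    exact Nat.card_unique
  | succ k ih =>
    classical
    letI : Fintype (BasT N C k) := Fintype.ofFinite _
    have := card_eq_sum_fibers (α := BasT N C (k + 1)) (β := BasT N C k)
      (fun v => ⟨Fin.init v.1, (linearIndependent_fin_succ'.1 v.2.1).1, fun i => v.2.2 _⟩)
    rw [this]
    have hfib : ∀ w : BasT N C k,
        Nat.card {v : BasT N C (k + 1) // (⟨Fin.init v.1,
          (linearIndependent_fin_succ'.1 v.2.1).1,
          fun i => v.2.2 _⟩ : BasT N C k) = w} = 2 ^ finrank (ZMod 2) C - 2 ^ k := by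
      intro w
      rw [Nat.card_congr (basFiberEquiv w), card_diff (span_le_of_basT w),
        card_submodule, card_submodule, finrank_span_tuple w.2.1]
    rw [Finset.sum_congr rfl (fun w _ => hfib w), Finset.sum_const, Finset.card_univ,
      smul_eq_mul, ← Nat.card_eq_fintype_card, ih, Finset.prod_range_succ]

lemma mem_dual_of_lagr {C : Submodule (ZMod 2) (V N)} (hC : C = sympDual C) {x : V N}
    (hx : x ∈ C) : x ∈ sympDual C := by
  rw [← hC]; exact hx

lemma finrank_lagr {C : Submodule (ZMod 2) (V N)} (hC : C = sympDual C) :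
    finrank (ZMod 2) C = N := by
  have h1 : finrank (ZMod 2) (sympDual C) = 2 * N - finrank (ZMod 2) C :=
    finrank_sympDual C
  have h2 : finrank (ZMod 2) C ≤ 2 * N := by
    have := Submodule.finrank_le C
    rwa [finrank_V] at this
  rw [← hC] at h1
  omega

lemma span_isoT_lagr (v : IsoT N N) :
    span (ZMod 2) (Set.range v.1) = sympDual (span (ZMod 2) (Set.range v.1)) :=
  Submodule.eq_of_le_of_finrank_eq (span_le_dual v.1 v.2.2)
    (by rw [finrank_sympDual, finrank_span_tuple v.2.1]; omega)

/-- the span map from isotropic `N`-tuples to Lagrangians -/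
def spanMap (N : ℕ) (v : IsoT N N) : {C : Submodule (ZMod 2) (V N) // C = sympDual C} :=
  ⟨span (ZMod 2) (Set.range v.1), span_isoT_lagr v⟩

/-- fiber equiv for the span map from isotropic N-tuples to Lagrangians -/
def lagrFiberEquiv (C : {C : Submodule (ZMod 2) (V N) // C = sympDual C}) :
    {v : IsoT N N // spanMap N v = C} ≃ BasT N C.1 N where
  toFun v := ⟨v.1.1, v.1.2.1, fun i => by
    have h : span (ZMod 2) (Set.range v.1.1) = C.1 := congrArg Subtype.val v.2
    rw [← h]
    exact subset_span (Set.mem_range_self i)⟩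
  invFun v := ⟨⟨v.1, v.2.1, fun i j =>
      mem_dual_of_lagr C.2 (v.2.2 i) _ (v.2.2 j)⟩,
    Subtype.ext (Submodule.eq_of_le_of_finrank_eq (span_le_of_basT v)
      (by show finrank (ZMod 2) (span (ZMod 2) (Set.range v.1)) = finrank (ZMod 2) C.1
          rw [finrank_span_tuple v.2.1, finrank_lagr C.2]))⟩
  left_inv v := Subtype.ext (Subtype.ext rfl)
  right_inv v := Subtype.ext rfl

end Count

/-- The number of symplectic self-dual subspaces of `F_2^{2N}` equals
`∏_{n=0}^{N-1}(2^{2N-n} - 2^n) / ∏_{n=0}^{N-1}(2^N - 2^n)`. -/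
theorem stmt2 (N : ℕ) :
    Nat.card {C : Submodule (ZMod 2) (V N) // C = sympDual C} =
      (∏ n ∈ Finset.range N, (2 ^ (2 * N - n) - 2 ^ n)) /
        (∏ n ∈ Finset.range N, (2 ^ N - 2 ^ n)) := by
  classical
  haveI : Finite (Submodule (ZMod 2) (V N)) :=
    Finite.of_injective (fun C => (C : Set (V N))) SetLike.coe_injective
  letI : Fintype {C : Submodule (ZMod 2) (V N) // C = sympDual C} := Fintype.ofFinite _
  have hpos : 0 < ∏ n ∈ Finset.range N, (2 ^ N - 2 ^ n) := by
    refine Finset.prod_pos fun n hn => ?_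
    have := Nat.pow_lt_pow_right (by norm_num : 1 < 2) (Finset.mem_range.1 hn)
    omega
  have hmain := card_eq_sum_fibers (α := IsoT N N) (f := spanMap N)
  rw [card_isoT N] at hmain
  have hfib : ∀ C : {C : Submodule (ZMod 2) (V N) // C = sympDual C},
      Nat.card {v : IsoT N N // spanMap N v = C} =
        ∏ n ∈ Finset.range N, (2 ^ N - 2 ^ n) := by
    intro C
    rw [Nat.card_congr (lagrFiberEquiv C), card_basT, finrank_lagr C.2]
  rw [Finset.sum_congr rfl (fun C _ => hfib C), Finset.sum_const, Finset.card_univ,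
    smul_eq_mul, ← Nat.card_eq_fintype_card] at hmain
  rw [hmain, Nat.mul_div_cancel _ hpos]
end

section
/- For any fixed nonzero vector c in F_2^{2N}, the number of symplectic self-dual subspaces of F_2^{2N} containing c equals ∏_{n=1}^{N-1}(2^{2N-n} - 2^n) / ∏_{n=1}^{N-1}(2^N - 2^n). -/
namespace Aux

variable {N : ℕ}

lemma symp_comm (u v : V N) : symp u v = symp v u := by
  unfold symp; exact Finset.sum_congr rfl fun n _ => by ring

lemma symp_add_left (u v w : V N) : symp (u + v) w = symp u w + symp v w := by
  unfold symp; rw [← Finset.sum_add_distrib]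
  exact Finset.sum_congr rfl fun n _ => by simp [Prod.fst_add, Prod.snd_add]; ring

lemma symp_add_right (u v w : V N) : symp u (v + w) = symp u v + symp u w := by
  rw [symp_comm, symp_add_left, symp_comm v u, symp_comm w u]

lemma symp_smul_left (c : ZMod 2) (u v : V N) : symp (c • u) v = c * symp u v := by
  unfold symp; rw [Finset.mul_sum]
  exact Finset.sum_congr rfl fun n _ => by simp [Prod.smul_fst, Prod.smul_snd, smul_eq_mul]; ring

lemma symp_smul_right (c : ZMod 2) (u v : V N) : symp u (c • v) = c * symp u v := by
  rw [symp_comm, symp_smul_left, symp_comm v u]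

lemma symp_self (u : V N) : symp u u = 0 := by
  unfold symp
  refine Finset.sum_eq_zero fun n _ => ?_
  have : ∀ a b : ZMod 2, a * b + b * a = 0 := by decide
  exact this _ _

/-- `symp` as a bilinear form. -/
def sympB (N : ℕ) : LinearMap.BilinForm (ZMod 2) (V N) :=
  LinearMap.mk₂ (ZMod 2) symp symp_add_left symp_smul_left symp_add_right symp_smul_right

@[simp] lemma sympB_apply (u v : V N) : sympB N u v = symp u v := rfl

lemma sympB_isRefl : (sympB N).IsRefl := fun u v h => by
  rw [sympB_apply, symp_comm] at h; exact h

lemma symp_single (u : V N) (n : Fin N) (p : ZMod 2 × ZMod 2) :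
    symp u (Pi.single n p) = (u n).1 * p.2 + (u n).2 * p.1 := by
  unfold symp
  rw [Finset.sum_eq_single n]
  · simp
  · intro m _ hm; simp [Pi.single_eq_of_ne hm]
  · simp

/-- For a nonzero vector, there is a vector pairing to 1 with it. -/
lemma exists_symp_one {c : V N} (hc : c ≠ 0) : ∃ b, symp c b = 1 := by
  have : ∃ n, c n ≠ 0 := by
    by_contra h
    push_neg at h
    exact hc (funext fun n => h n)
  obtain ⟨n, hn⟩ := this
  by_cases h1 : (c n).1 = 0
  · have h2 : (c n).2 = 1 := by
      have h2' : (c n).2 ≠ 0 := fun h2 => hn (Prod.ext h1 h2)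
      revert h2'; generalize (c n).2 = a; revert a; decide
    exact ⟨Pi.single n (1, 0), by rw [symp_single, h2]; ring⟩
  · have h1' : (c n).1 = 1 := by
      revert h1; generalize (c n).1 = a; revert a; decide
    exact ⟨Pi.single n (0, 1), by rw [symp_single, h1']; ring⟩

lemma sympB_nondegenerate : (sympB N).Nondegenerate := by
  refine (LinearMap.IsRefl.nondegenerate_iff_separatingLeft sympB_isRefl).mpr ?_
  intro m hm
  by_contra h
  obtain ⟨b, hb⟩ := exists_symp_one h
  rw [show symp m b = sympB N m b from rfl, hm b] at hb
  exact one_ne_zero hb.symm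

lemma mem_sympDual {C : Submodule (ZMod 2) (V N)} {u : V N} :
    u ∈ sympDual C ↔ ∀ v ∈ C, symp u v = 0 := Iff.rfl

lemma sympDual_eq_orthogonal (C : Submodule (ZMod 2) (V N)) :
    sympDual C = (sympB N).orthogonal C := by
  ext u
  rw [mem_sympDual, LinearMap.BilinForm.mem_orthogonal_iff]
  constructor
  · intro h v hv
    show sympB N v u = 0
    rw [sympB_apply, symp_comm]; exact h v hv
  · intro h v hv
    have := h v hv
    rw [sympB_apply, symp_comm] at this
    exact this

instance : Finite (Submodule (ZMod 2) (V N)) :=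
  Finite.of_injective (fun C => (C : Set (V N))) fun _ _ h => SetLike.coe_injective h

lemma finrank_V : Module.finrank (ZMod 2) (V N) = 2 * N := by
  rw [Module.finrank_pi_fintype, Module.finrank_prod, Module.finrank_self]
  simp [two_mul, Finset.sum_const]
  ring

lemma finrank_selfdual {C : Submodule (ZMod 2) (V N)} (hC : C = sympDual C) :
    Module.finrank (ZMod 2) C = N := by
  have h := LinearMap.BilinForm.finrank_orthogonal (B := sympB N)
    sympB_nondegenerate C
  rw [← sympDual_eq_orthogonal, ← hC, finrank_V] at h
  have : Module.finrank (ZMod 2) C ≤ 2 * N := finrank_V (N := N) ▸ Submodule.finrank_le C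
  omega

lemma card_selfdual {C : Submodule (ZMod 2) (V N)} (hC : C = sympDual C) :
    Nat.card C = 2 ^ N := by
  have := Fintype.ofFinite C
  rw [Nat.card_eq_fintype_card, Module.card_eq_pow_finrank (K := ZMod 2), finrank_selfdual hC,
    ZMod.card]

lemma two_zmod2 (a : ZMod 2) : a + a = 0 := by revert a; decide

lemma vadd_self (x : V N) : x + x = 0 := by
  rw [← two_smul (ZMod 2), show (2 : ZMod 2) = 0 by decide, zero_smul]

lemma add_add_cancel (x y : V N) : x + (x + y) = y := by
  rw [← add_assoc, vadd_self, zero_add]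

/-- The symplectic transvection along `a`. -/
def tauFun (a : V N) (x : V N) : V N := x + symp x a • a

lemma tau_tau (a x : V N) : tauFun a (tauFun a x) = x := by
  unfold tauFun
  rw [symp_add_left, symp_smul_left, symp_self, mul_zero, add_zero, add_assoc, ← add_smul,
    two_zmod2, zero_smul, add_zero]

def tau (a : V N) : V N ≃ₗ[ZMod 2] V N where
  toFun := tauFun a
  invFun := tauFun a
  left_inv := tau_tau a
  right_inv := tau_tau a
  map_add' x y := by
    unfold tauFun
    rw [symp_add_left, add_smul]
    abel
  map_smul' c x := by
    show tauFun a (c • x) = c • tauFun a x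
    unfold tauFun
    rw [symp_smul_left, smul_add, mul_smul]

lemma symp_tau (a u v : V N) : symp (tau a u) (tau a v) = symp u v := by
  show symp (tauFun a u) (tauFun a v) = symp u v
  unfold tauFun
  rw [symp_add_left, symp_add_right, symp_add_right, symp_smul_left, symp_smul_right,
    symp_smul_right, symp_smul_left, symp_self, mul_zero, mul_zero, add_zero]
  rw [symp_comm a v]
  have h : ∀ s t : ZMod 2, symp u v + s * t + t * s = symp u v := by
    intro s t
    rw [mul_comm t s, add_assoc, two_zmod2, add_zero]
  exact h _ _

lemma tau_apply (a x : V N) : tau a x = x + symp x a • a := rfl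

/-- Transitivity of the symplectic group on nonzero vectors, via transvections. -/
lemma exists_symplEquiv {c d : V N} (hc : c ≠ 0) (hd : d ≠ 0) :
    ∃ T : V N ≃ₗ[ZMod 2] V N, (∀ u v, symp (T u) (T v) = symp u v) ∧ T c = d := by
  by_cases hcd : c = d
  · exact ⟨LinearEquiv.refl _ _, fun u v => rfl, hcd⟩
  by_cases h1 : symp c d = 1
  · refine ⟨tau (c + d), symp_tau _, ?_⟩
    rw [tau_apply, symp_add_right, symp_self, zero_add, h1, one_smul]
    exact add_add_cancel _ _
  · -- symp c d = 0
    have h0 : symp c d = 0 := by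
      revert h1; generalize symp c d = s; revert s; decide
    -- find b with symp c b = 1 and symp d b = 1
    obtain ⟨b0, hb0⟩ := exists_symp_one hc
    obtain ⟨b1, hb1⟩ := exists_symp_one hd
    obtain ⟨b, hcb, hdb⟩ : ∃ b, symp c b = 1 ∧ symp d b = 1 := by
      by_cases h2 : symp d b0 = 1
      · exact ⟨b0, hb0, h2⟩
      by_cases h3 : symp c b1 = 1
      · exact ⟨b1, h3, hb1⟩
      have h2' : symp d b0 = 0 := by revert h2; generalize symp d b0 = s; revert s; decide
      have h3' : symp c b1 = 0 := by revert h3; generalize symp c b1 = s; revert s; decide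
      exact ⟨b0 + b1, by rw [symp_add_right, hb0, h3', add_zero],
        by rw [symp_add_right, h2', hb1, zero_add]⟩
    have hb_ne : symp c b = 1 := hcb
    refine ⟨(tau (c + b)).trans (tau (b + d)), fun u v => by
      simp only [LinearEquiv.trans_apply, symp_tau], ?_⟩
    have step1 : tau (c + b) c = b := by
      rw [tau_apply, symp_add_right, symp_self, zero_add, hcb, one_smul]
      exact add_add_cancel _ _
    have step2 : tau (b + d) b = d := by
      rw [tau_apply, symp_add_right, symp_self, zero_add, symp_comm b d, hdb, one_smul]
      exact add_add_cancel _ _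
    simp only [LinearEquiv.trans_apply, step1, step2]

lemma sympDual_map (T : V N ≃ₗ[ZMod 2] V N) (hT : ∀ u v, symp (T u) (T v) = symp u v)
    (C : Submodule (ZMod 2) (V N)) :
    sympDual (C.map (T : V N →ₗ[ZMod 2] V N)) = (sympDual C).map (T : V N →ₗ[ZMod 2] V N) := by
  ext u
  rw [mem_sympDual, Submodule.mem_map]
  constructor
  · intro h
    refine ⟨T.symm u, ?_, by simp⟩
    rw [mem_sympDual]
    intro v hv
    have h1 : symp (T (T.symm u)) (T v) = symp (T.symm u) v := hT _ _
    rw [T.apply_symm_apply] at h1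
    rw [← h1]
    exact h (T v) (Submodule.mem_map_of_mem hv)
  · rintro ⟨w, hw, rfl⟩ v hv
    obtain ⟨x, hx, rfl⟩ := Submodule.mem_map.mp hv
    rw [show (T : V N →ₗ[ZMod 2] V N) w = T w from rfl, show (T : V N →ₗ[ZMod 2] V N) x = T x from
      rfl, hT]
    exact mem_sympDual.mp hw x hx

noncomputable def gcount (N : ℕ) : ℕ :=
  Nat.card {C : Submodule (ZMod 2) (V N) // C = sympDual C}

noncomputable def fcount (N : ℕ) (c : V N) : ℕ :=
  Nat.card {C : Submodule (ZMod 2) (V N) // C = sympDual C ∧ c ∈ C}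

lemma fcount_invariant {c d : V N} (hc : c ≠ 0) (hd : d ≠ 0) : fcount N c = fcount N d := by
  obtain ⟨T, hT, hTc⟩ := exists_symplEquiv hc hd
  have hmap : ∀ C : Submodule (ZMod 2) (V N), (Submodule.orderIsoMapComap T) C =
      C.map (T : V N →ₗ[ZMod 2] V N) := fun C => rfl
  refine Nat.card_congr (Equiv.subtypeEquiv (Submodule.orderIsoMapComap T).toEquiv ?_)
  intro C
  show C = sympDual C ∧ c ∈ C ↔ ((Submodule.orderIsoMapComap T) C = sympDual ((Submodule.orderIsoMapComap T) C) ∧ d ∈ (Submodule.orderIsoMapComap T) C)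
  rw [hmap]
  constructor
  · rintro ⟨h1, h2⟩
    refine ⟨?_, hTc ▸ Submodule.mem_map_of_mem h2⟩
    rw [sympDual_map T hT, ← h1]
  · rintro ⟨h1, h2⟩
    have hinj := Submodule.map_injective_of_injective (f := (T : V N →ₗ[ZMod 2] V N)) T.injective
    constructor
    · apply hinj
      rw [h1, sympDual_map T hT]
    · have : T.symm d ∈ C := by
        rw [Submodule.mem_map_equiv] at h2
        exact h2
      rwa [← hTc, T.symm_apply_apply] at this

lemma card_nonzero_inC {C : Submodule (ZMod 2) (V N)} (hC : C = sympDual C) :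
    Nat.card {x : V N // x ∈ C ∧ x ≠ 0} = 2 ^ N - 1 := by
  have e : {x : V N // x ∈ C ∧ x ≠ 0} ≃ {y : C // y ≠ 0} :=
    { toFun := fun x => ⟨⟨x.1, x.2.1⟩, fun h => x.2.2 (congrArg Subtype.val h)⟩
      invFun := fun y => ⟨y.1.1, y.1.2, fun h => y.2 (Subtype.ext h)⟩
      left_inv := fun x => rfl
      right_inv := fun y => rfl }
  rw [Nat.card_congr e]
  classical
  have : Nat.card {y : C // y ≠ 0} = Nat.card C - 1 := by
    have := Fintype.ofFinite C
    rw [Nat.card_eq_fintype_card, Nat.card_eq_fintype_card]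
    have h1 : Fintype.card {y : C // ¬ (y = 0)} = Fintype.card C - Fintype.card {y : C // y = 0} :=
      Fintype.card_subtype_compl _
    rw [h1, Fintype.card_subtype_eq (0 : C)]
  rw [this, card_selfdual hC]

lemma card_V : Nat.card (V N) = 2 ^ (2 * N) := by
  rw [Nat.card_eq_fintype_card, Fintype.card_fun]
  simp [Fintype.card_prod, ZMod.card]
  rw [show (4 : ℕ) = 2 ^ 2 by norm_num, ← pow_mul]

lemma card_nonzero_V : Nat.card {x : V N // x ≠ 0} = 2 ^ (2 * N) - 1 := by
  classical
  rw [Nat.card_eq_fintype_card]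
  have h1 : Fintype.card {x : V N // ¬ (x = 0)} =
      Fintype.card (V N) - Fintype.card {x : V N // x = 0} := Fintype.card_subtype_compl _
  rw [h1, Fintype.card_subtype_eq (0 : V N), ← Nat.card_eq_fintype_card, card_V]

lemma double_count {c : V N} (hc : c ≠ 0) :
    gcount N * (2 ^ N - 1) = fcount N c * (2 ^ (2 * N) - 1) := by
  classical
  letI : Fintype {C : Submodule (ZMod 2) (V N) // C = sympDual C} := Fintype.ofFinite _
  letI : Fintype {x : V N // x ≠ 0} := Fintype.ofFinite _
  letI I1 : ∀ C : {C : Submodule (ZMod 2) (V N) // C = sympDual C},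
      Fintype {x : V N // x ∈ C.1 ∧ x ≠ 0} := fun C => Fintype.ofFinite _
  letI I2 : ∀ x : {x : V N // x ≠ 0},
      Fintype {C : Submodule (ZMod 2) (V N) // C = sympDual C ∧ x.1 ∈ C} :=
    fun x => Fintype.ofFinite _
  have e : (Σ C : {C : Submodule (ZMod 2) (V N) // C = sympDual C},
        {x : V N // x ∈ C.1 ∧ x ≠ 0}) ≃
      (Σ x : {x : V N // x ≠ 0},
        {C : Submodule (ZMod 2) (V N) // C = sympDual C ∧ x.1 ∈ C}) :=
    { toFun := fun p => ⟨⟨p.2.1, p.2.2.2⟩, ⟨p.1.1, p.1.2, p.2.2.1⟩⟩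
      invFun := fun p => ⟨⟨p.2.1, p.2.2.1⟩, ⟨p.1.1, p.2.2.2, p.1.2⟩⟩
      left_inv := fun p => rfl
      right_inv := fun p => rfl }
  have hcard := Fintype.card_congr e
  rw [Fintype.card_sigma, Fintype.card_sigma] at hcard
  have hL : ∑ C : {C : Submodule (ZMod 2) (V N) // C = sympDual C},
      Fintype.card {x : V N // x ∈ C.1 ∧ x ≠ 0} = gcount N * (2 ^ N - 1) := by
    rw [Finset.sum_congr rfl (fun C _ => ?_), Finset.sum_const, Finset.card_univ, smul_eq_mul,
      gcount, Nat.card_eq_fintype_card]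
    rw [← Nat.card_eq_fintype_card, card_nonzero_inC C.2]
  have hR : ∑ x : {x : V N // x ≠ 0},
      Fintype.card {C : Submodule (ZMod 2) (V N) // C = sympDual C ∧ x.1 ∈ C} =
      (2 ^ (2 * N) - 1) * fcount N c := by
    rw [Finset.sum_congr rfl (fun x _ => ?_), Finset.sum_const, Finset.card_univ, smul_eq_mul,
      ← Nat.card_eq_fintype_card, card_nonzero_V]
    rw [← Nat.card_eq_fintype_card]
    exact fcount_invariant x.2 hc
  rw [hL, hR] at hcard
  rw [hcard, mul_comm]

lemma symp_zero_right (u : V N) : symp u 0 = 0 := by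
  unfold symp; exact Finset.sum_eq_zero fun n _ => by simp

/-- The distinguished vector `e₁`. -/
def eV (N : ℕ) : V (N + 1) := Fin.cons (1, 0) 0

lemma eV_ne_zero : eV N ≠ 0 := by
  intro h
  have := congrFun h 0
  rw [eV, Fin.cons_zero] at this
  exact one_ne_zero (congrArg Prod.fst this)

/-- Projection dropping the first block. -/
def piL (N : ℕ) : V (N + 1) →ₗ[ZMod 2] V N :=
  LinearMap.funLeft (ZMod 2) (ZMod 2 × ZMod 2) Fin.succ

lemma piL_apply (v : V (N + 1)) (n : Fin N) : piL N v n = v n.succ := rfl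

/-- Inclusion with zero first block. -/
def iotaL (N : ℕ) : V N →ₗ[ZMod 2] V (N + 1) where
  toFun w := Fin.cons 0 w
  map_add' w w' := by
    funext n
    refine Fin.cases ?_ (fun i => ?_) n <;> simp
  map_smul' c w := by
    funext n
    refine Fin.cases ?_ (fun i => ?_) n <;> simp

lemma iotaL_zero (w : V N) : iotaL N w 0 = 0 := rfl
lemma iotaL_succ (w : V N) (n : Fin N) : iotaL N w n.succ = w n := by
  rw [show iotaL N w = Fin.cons 0 w from rfl]
  exact Fin.cons_succ _ _ _

lemma piL_iotaL (w : V N) : piL N (iotaL N w) = w := by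
  funext n; rw [piL_apply, iotaL_succ]

lemma symp_succ (u v : V (N + 1)) :
    symp u v = ((u 0).1 * (v 0).2 + (u 0).2 * (v 0).1) + symp (piL N u) (piL N v) := by
  unfold symp
  rw [Fin.sum_univ_succ]
  rfl

lemma symp_of_snd_zero {u v : V (N + 1)} (hu : (u 0).2 = 0) (hv : (v 0).2 = 0) :
    symp u v = symp (piL N u) (piL N v) := by
  rw [symp_succ, hu, hv, mul_zero, zero_mul, add_zero, zero_add]

lemma symp_iotaL (u : V (N + 1)) (w : V N) : symp u (iotaL N w) = symp (piL N u) w := by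
  rw [symp_succ, piL_iotaL, iotaL_zero]
  show (u 0).1 * 0 + (u 0).2 * 0 + _ = _
  rw [mul_zero, mul_zero, add_zero, zero_add]

lemma eV_zero : eV N 0 = (1, 0) := rfl

lemma eV_succ (i : Fin N) : eV N i.succ = 0 := Fin.cons_succ _ _ _

lemma piL_eV : piL N (eV N) = 0 := by
  funext n; rw [piL_apply, eV_succ]; rfl

lemma symp_eV (v : V (N + 1)) : symp v (eV N) = (v 0).2 := by
  unfold symp
  rw [Fin.sum_univ_succ, eV_zero]
  have hs : ∀ i : Fin N, eV N i.succ = 0 := eV_succ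
  simp [hs]

/-- first-block-second-coordinate functional. -/
def phiL (N : ℕ) : V (N + 1) →ₗ[ZMod 2] ZMod 2 where
  toFun v := (v 0).2
  map_add' u v := rfl
  map_smul' c v := rfl

/-- The inverse construction: `Ψ L = {v | (v 0).2 = 0 ∧ π v ∈ L}`. -/
noncomputable def psiS (L : Submodule (ZMod 2) (V N)) : Submodule (ZMod 2) (V (N + 1)) :=
  LinearMap.ker (phiL N) ⊓ L.comap (piL N)

lemma mem_psiS {L : Submodule (ZMod 2) (V N)} {v : V (N + 1)} :
    v ∈ psiS L ↔ (v 0).2 = 0 ∧ piL N v ∈ L := Iff.rfl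

/-- Membership of `eV`. -/
lemma eV_mem_psiS (L : Submodule (ZMod 2) (V N)) : eV N ∈ psiS L := by
  rw [mem_psiS]
  constructor
  · rw [eV_zero]
  · rw [piL_eV]
    exact L.zero_mem

lemma snd_zero_of_mem {C : Submodule (ZMod 2) (V (N + 1))} (h1 : C = sympDual C)
    (h2 : eV N ∈ C) {v : V (N + 1)} (hv : v ∈ C) : (v 0).2 = 0 := by
  rw [← symp_eV]
  exact mem_sympDual.mp (h1 ▸ hv) _ h2

/-- Claim 1: Ψ (Φ C) = C. -/
lemma psiS_map_piL {C : Submodule (ZMod 2) (V (N + 1))} (h1 : C = sympDual C)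
    (h2 : eV N ∈ C) : psiS (C.map (piL N)) = C := by
  apply le_antisymm
  · intro v hv
    rw [mem_psiS] at hv
    obtain ⟨hv2, u, hu, hpu⟩ := hv
    -- d := v + u is a multiple of eV
    have pair_self : ∀ p : ZMod 2 × ZMod 2, p + p = 0 := by decide
    have hd : v + u = ((v + u) 0).1 • eV N := by
      funext n
      refine Fin.cases ?_ (fun i => ?_) n
      · have h20 : ((v + u) 0).2 = 0 := by
          show (v 0).2 + (u 0).2 = 0
          rw [hv2, snd_zero_of_mem h1 h2 hu, add_zero]
        show (v + u) 0 = ((v + u) 0).1 • eV N 0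
        rw [eV_zero]
        ext
        · simp
        · rw [h20]; simp
      · have hz : (v + u) i.succ = 0 := by
          show v i.succ + u i.succ = 0
          have hc := congrFun hpu i
          rw [piL_apply, piL_apply] at hc
          rw [hc, pair_self]
        rw [hz]
        show (0 : ZMod 2 × ZMod 2) = ((v + u) 0).1 • eV N i.succ
        rw [eV_succ, smul_zero]
    have hvc : v = u + (v + u) := by
      rw [add_comm v u, ← add_assoc, vadd_self, zero_add]
    rw [hvc, hd]
    exact C.add_mem hu (C.smul_mem _ h2)
  · intro v hv
    exact mem_psiS.mpr ⟨snd_zero_of_mem h1 h2 hv, Submodule.mem_map_of_mem hv⟩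

/-- Claim 2: Φ (Ψ L) = L. -/
lemma map_piL_psiS (L : Submodule (ZMod 2) (V N)) : (psiS L).map (piL N) = L := by
  apply le_antisymm
  · rintro w ⟨v, hv, rfl⟩
    exact (mem_psiS.mp hv).2
  · intro w hw
    refine ⟨iotaL N w, mem_psiS.mpr ⟨?_, ?_⟩, piL_iotaL w⟩
    · rw [iotaL_zero]; rfl
    · rw [piL_iotaL]; exact hw

/-- Claim 3: the image of a self-dual subspace containing `eV` is self-dual. -/
lemma map_piL_selfdual {C : Submodule (ZMod 2) (V (N + 1))} (h1 : C = sympDual C)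
    (h2 : eV N ∈ C) : C.map (piL N) = sympDual (C.map (piL N)) := by
  apply le_antisymm
  · rintro w ⟨u, hu, rfl⟩
    rw [mem_sympDual]
    rintro x ⟨v, hv, rfl⟩
    rw [← symp_of_snd_zero (snd_zero_of_mem h1 h2 hu) (snd_zero_of_mem h1 h2 hv)]
    exact mem_sympDual.mp (h1 ▸ hu) v hv
  · intro w hw
    have hiw : iotaL N w ∈ C := by
      rw [h1, mem_sympDual]
      intro u hu
      rw [symp_comm, symp_iotaL, symp_comm]
      exact mem_sympDual.mp hw (piL N u) (Submodule.mem_map_of_mem hu)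
    exact ⟨iotaL N w, hiw, piL_iotaL w⟩

/-- Claim 4: `Ψ L` of a self-dual subspace is self-dual. -/
lemma psiS_selfdual {L : Submodule (ZMod 2) (V N)} (hL : L = sympDual L) :
    psiS L = sympDual (psiS L) := by
  apply le_antisymm
  · intro u hu
    rw [mem_sympDual]
    intro v hv
    rw [symp_of_snd_zero (mem_psiS.mp hu).1 (mem_psiS.mp hv).1]
    exact mem_sympDual.mp (hL ▸ (mem_psiS.mp hu).2) _ (mem_psiS.mp hv).2
  · intro u hu
    rw [mem_psiS]
    constructor
    · rw [← symp_eV]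
      exact mem_sympDual.mp hu _ (eV_mem_psiS L)
    · rw [hL, mem_sympDual]
      intro x hx
      rw [← symp_iotaL]
      exact mem_sympDual.mp hu _ (mem_psiS.mpr ⟨iotaL_zero x ▸ rfl, by rw [piL_iotaL]; exact hx⟩)

/-- The key recursion: counting self-dual subspaces containing `eV`. -/
lemma card_step (N : ℕ) :
    Nat.card {C : Submodule (ZMod 2) (V (N + 1)) // C = sympDual C ∧ eV N ∈ C} =
      Nat.card {L : Submodule (ZMod 2) (V N) // L = sympDual L} := by
  refine Nat.card_congr
    ⟨fun C => ⟨C.1.map (piL N), (map_piL_selfdual C.2.1 C.2.2)⟩,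
     fun L => ⟨psiS L.1, psiS_selfdual L.2, eV_mem_psiS L.1⟩, ?_, ?_⟩
  · rintro ⟨C, h1, h2⟩
    exact Subtype.ext (psiS_map_piL h1 h2)
  · rintro ⟨L, hL⟩
    exact Subtype.ext (map_piL_psiS L)

lemma gcount_zero : gcount 0 = 1 := by
  rw [gcount, Nat.card_eq_one_iff_unique]
  have hsub : Subsingleton (Submodule (ZMod 2) (V 0)) := by
    constructor
    intro a b
    have : ∀ C : Submodule (ZMod 2) (V 0), C = ⊥ := fun C => by
      rw [eq_bot_iff]
      intro x _
      exact Subsingleton.elim x 0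
    rw [this a, this b]
  constructor
  · constructor
    intro a b
    exact Subtype.ext (Subsingleton.elim a.1 b.1)
  · exact ⟨⟨⊥, Subsingleton.elim _ _⟩⟩

lemma gcount_succ (N : ℕ) : gcount (N + 1) = gcount N * (2 ^ (N + 1) + 1) := by
  have h := double_count (eV_ne_zero (N := N))
  have hcs : fcount (N + 1) (eV N) = gcount N := card_step N
  rw [hcs] at h
  have hsq : 2 ^ (2 * (N + 1)) - 1 = (2 ^ (N + 1) + 1) * (2 ^ (N + 1) - 1) := by
    have h1 : (1 : ℕ) ≤ 2 ^ (N + 1) := Nat.one_le_two_pow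
    have h2 : 2 ^ (N + 1) * 2 ^ (N + 1) = 2 ^ (2 * (N + 1)) := by
      rw [← pow_add]; congr 1; omega
    have h3 : 2 ^ (N + 1) ≤ 2 ^ (2 * (N + 1)) :=
      Nat.pow_le_pow_right (by norm_num) (by omega)
    rw [Nat.add_mul, one_mul, Nat.mul_sub, mul_one, h2]
    omega
  rw [hsq, ← mul_assoc] at h
  have hpos : 0 < 2 ^ (N + 1) - 1 := by
    have : (2 : ℕ) ≤ 2 ^ (N + 1) := by
      calc (2:ℕ) = 2 ^ 1 := rfl
      _ ≤ 2 ^ (N + 1) := Nat.pow_le_pow_right (by norm_num) (by omega)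
    omega
  exact Nat.eq_of_mul_eq_mul_right hpos h

lemma gcount_formula (N : ℕ) : gcount N = ∏ m ∈ Finset.Icc 1 N, (2 ^ m + 1) := by
  induction N with
  | zero => simp [gcount_zero]
  | succ n ih =>
      rw [gcount_succ, ih, Finset.prod_Icc_succ_top (by omega : 1 ≤ n + 1)]

lemma arith (N : ℕ) (hN : 1 ≤ N) :
    (∏ n ∈ Finset.Ico 1 N, (2 ^ (2 * N - n) - 2 ^ n)) /
      (∏ n ∈ Finset.Ico 1 N, (2 ^ N - 2 ^ n)) =
    ∏ m ∈ Finset.Icc 1 (N - 1), (2 ^ m + 1) := by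
  have hfac : ∀ n ∈ Finset.Ico 1 N,
      2 ^ (2 * N - n) - 2 ^ n = (2 ^ N - 2 ^ n) * (2 ^ (N - n) + 1) := by
    intro n hn
    obtain ⟨hn1, hn2⟩ := Finset.mem_Ico.mp hn
    have hA : 2 ^ n * 2 ^ (N - n) = 2 ^ N := by rw [← pow_add]; congr 1; omega
    have hB : 2 ^ N * 2 ^ (N - n) = 2 ^ (2 * N - n) := by rw [← pow_add]; congr 1; omega
    have hle : 2 ^ n ≤ 2 ^ N := Nat.pow_le_pow_right (by norm_num) (le_of_lt hn2)
    rw [Nat.sub_mul, mul_add, mul_add, mul_one, mul_one, hB, hA]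
    omega
  rw [Finset.prod_congr rfl hfac, Finset.prod_mul_distrib]
  have hpos : 0 < ∏ n ∈ Finset.Ico 1 N, (2 ^ N - 2 ^ n) := by
    apply Finset.prod_pos
    intro n hn
    obtain ⟨hn1, hn2⟩ := Finset.mem_Ico.mp hn
    have : 2 ^ n < 2 ^ N := Nat.pow_lt_pow_right (by norm_num) hn2
    omega
  rw [Nat.mul_div_cancel_left _ hpos]
  refine Finset.prod_nbij' (fun n => N - n) (fun m => N - m) ?_ ?_ ?_ ?_ ?_
  · intro n hn
    obtain ⟨hn1, hn2⟩ := Finset.mem_Ico.mp hn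
    show N - n ∈ Finset.Icc 1 (N - 1)
    rw [Finset.mem_Icc]
    omega
  · intro m hm
    obtain ⟨hm1, hm2⟩ := Finset.mem_Icc.mp hm
    show N - m ∈ Finset.Ico 1 N
    rw [Finset.mem_Ico]
    omega
  · intro n hn
    obtain ⟨hn1, hn2⟩ := Finset.mem_Ico.mp hn
    show N - (N - n) = n
    omega
  · intro m hm
    obtain ⟨hm1, hm2⟩ := Finset.mem_Icc.mp hm
    show N - (N - m) = m
    omega
  · intro n hn
    rfl

end Aux

/-- For any fixed nonzero `c ∈ F_2^{2N}`, the number of symplectic self-dual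
subspaces of `F_2^{2N}` containing `c` equals
`∏_{n=1}^{N-1}(2^{2N-n} - 2^n) / ∏_{n=1}^{N-1}(2^N - 2^n)`. -/
theorem stmt3 (N : ℕ) (c : V N) (hc : c ≠ 0) :
    Nat.card {C : Submodule (ZMod 2) (V N) // C = sympDual C ∧ c ∈ C} =
      (∏ n ∈ Finset.Ico 1 N, (2 ^ (2 * N - n) - 2 ^ n)) /
        (∏ n ∈ Finset.Ico 1 N, (2 ^ N - 2 ^ n)) := by
  cases N with
  | zero => exact absurd (funext fun i => i.elim0) hc
  | succ M =>
      rw [Aux.arith (M + 1) (by omega)]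
      have h1 : Nat.card {C : Submodule (ZMod 2) (V (M + 1)) // C = sympDual C ∧ c ∈ C} =
          Aux.fcount (M + 1) c := rfl
      have h2 : Aux.fcount (M + 1) (Aux.eV M) = Aux.gcount M := Aux.card_step M
      rw [h1, Aux.fcount_invariant hc (Aux.eV_ne_zero (N := M)), h2, Aux.gcount_formula]
      simp
end

section
/- Let p be a probability vector on F_2^2 with all entries positive and entropy H(p) = -∑_x p_x log₂ p_x. For m ∈ (F_2^2)^N set q_m = ∏_n p_{m_n}. Then for any ε > 0, any N, and any subset X ⊆ (F_2^2)^N with |X| = 2^N, ∑_{m∈X} q_m < 2^{N(1−H(p)+ε)} + 2 exp(−2ε²N/Δ²), where Δ = log₂(max_x p_x) − log₂(min_x p_x) > 0. -/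
open scoped Classical

/-- The four-element index set `F_2^2` of the Bell basis. -/
abbrev F4 := ZMod 2 × ZMod 2

/-- The base-2 entropy `H(p) = -∑_x p_x log₂ p_x` of a probability vector on `F_2^2`. -/
noncomputable def H4 (p : F4 → ℝ) : ℝ := -∑ x, p x * Real.logb 2 (p x)

/-- The product probability `q_m = ∏_n p_{m_n}` on `(F_2^2)^N`. -/
def qprod {N : ℕ} (p : F4 → ℝ) (m : Fin N → F4) : ℝ := ∏ n, p (m n)

/-- The typical set `T(ε) = {m : |−(1/N) log₂ q_m − H(p)| < ε}`. -/
noncomputable def typFinset (N : ℕ) (p : F4 → ℝ) (ε : ℝ) : Finset (Fin N → F4) :=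
  Finset.univ.filter fun m =>
    |(-(1 / N : ℝ)) * Real.logb 2 (qprod p m) - H4 p| < ε

/-- `Δ = log₂(max_x p_x) − log₂(min_x p_x)`. -/
noncomputable def Δ4 (p : F4 → ℝ) : ℝ :=
  Real.logb 2 (Finset.univ.sup' Finset.univ_nonempty p) -
    Real.logb 2 (Finset.univ.inf' Finset.univ_nonempty p)

lemma L_bound (q h : ℝ) (h0 : 0 ≤ q) (h1 : q ≤ 1) :
    Real.log (1 - q + q * Real.exp h) ≤ q * h + h ^ 2 / 8 := by
  have hDpos : ∀ x : ℝ, 0 < 1 - q + q * Real.exp x := by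
    intro x
    rcases eq_or_lt_of_le h0 with h | h
    · simp [← h]
    · have := Real.exp_pos x
      nlinarith
  set D : ℝ → ℝ := fun x => 1 - q + q * Real.exp x with hD
  set F : ℝ → ℝ := fun x => q * x + x ^ 2 / 8 - Real.log (D x) with hF
  set F' : ℝ → ℝ := fun x => q + x / 4 - q * Real.exp x / D x with hF'
  have hdD : ∀ x, HasDerivAt D (q * Real.exp x) x := by
    intro x
    exact ((Real.hasDerivAt_exp x).const_mul q).const_add (1 - q)
  have hdF : ∀ x, HasDerivAt F (F' x) x := by
    intro x
    have hlog := (hdD x).log (hDpos x).ne'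
    have hpoly : HasDerivAt (fun x : ℝ => q * x + x ^ 2 / 8) (q + 2 * x / 8) x := by
      have := ((hasDerivAt_pow 2 x).div_const 8).const_add 0
      have h2 : HasDerivAt (fun x : ℝ => q * x) q x := by
        simpa using (hasDerivAt_id x).const_mul q
      exact (h2.add ((hasDerivAt_pow 2 x).div_const 8)).congr_deriv (by norm_num)
    have := hpoly.sub hlog
    refine this.congr_deriv ?_
    ring
  have hdF' : ∀ x, HasDerivAt F'
      (1 / 4 - (q * Real.exp x / D x) * (1 - q * Real.exp x / D x)) x := by
    intro x
    have hnum : HasDerivAt (fun x => q * Real.exp x) (q * Real.exp x) x := by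
      simpa using (Real.hasDerivAt_exp x).const_mul q
    have hquot := hnum.div (hdD x) (hDpos x).ne'
    have hlin : HasDerivAt (fun x : ℝ => q + x / 4) (1 / 4) x := by
      simpa using ((hasDerivAt_id x).div_const 4).const_add q
    have := hlin.sub hquot
    refine this.congr_deriv ?_
    have : D x ≠ 0 := (hDpos x).ne'
    field_simp
  have hgmem : ∀ x, 0 ≤ q * Real.exp x / D x ∧ q * Real.exp x / D x ≤ 1 := by
    intro x
    constructor
    · have := (hDpos x).le
      have := Real.exp_pos x
      positivity
    · rw [div_le_one (hDpos x)]
      show q * Real.exp x ≤ 1 - q + q * Real.exp x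
      linarith
  have hF'deriv_nonneg : ∀ x, 0 ≤ 1 / 4 - (q * Real.exp x / D x) * (1 - q * Real.exp x / D x) := by
    intro x
    obtain ⟨hg0, hg1⟩ := hgmem x
    nlinarith [sq_nonneg (q * Real.exp x / D x - 1 / 2)]
  have hF'mono : Monotone F' := monotone_of_hasDerivAt_nonneg hdF' hF'deriv_nonneg
  have hF'0 : F' 0 = 0 := by simp [hF', hD]
  have hF0 : F 0 = 0 := by simp [hF, hD]
  have key : 0 ≤ F h := by
    rcases le_total 0 h with hh | hh
    · have hmono : MonotoneOn F (Set.Ici 0) := by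
        apply monotoneOn_of_deriv_nonneg (convex_Ici 0)
          (Continuous.continuousOn (by
            exact ((continuous_const.mul continuous_id).add (continuous_pow 2 |>.div_const 8)).sub
              ((continuous_const.add (continuous_const.mul Real.continuous_exp)).log (fun x => (hDpos x).ne'))))
          (fun x _ => (hdF x).differentiableAt.differentiableWithinAt)
        intro x hx
        rw [(hdF x).deriv]
        rw [interior_Ici] at hx
        have : F' 0 ≤ F' x := hF'mono (le_of_lt hx)
        linarith [hF'0 ▸ this]
      have := hmono (Set.self_mem_Ici) hh hh
      linarith [hF0 ▸ this]
    · have hanti : AntitoneOn F (Set.Iic 0) := by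
        apply antitoneOn_of_deriv_nonpos (convex_Iic 0)
          (Continuous.continuousOn (by
            exact ((continuous_const.mul continuous_id).add (continuous_pow 2 |>.div_const 8)).sub
              ((continuous_const.add (continuous_const.mul Real.continuous_exp)).log (fun x => (hDpos x).ne'))))
          (fun x _ => (hdF x).differentiableAt.differentiableWithinAt)
        intro x hx
        rw [(hdF x).deriv]
        rw [interior_Iic] at hx
        have : F' x ≤ F' 0 := hF'mono (le_of_lt hx)
        linarith [hF'0 ▸ this]
      have := hanti hh (Set.self_mem_Iic) hh
      linarith [hF0 ▸ this]
  have : Real.log (D h) ≤ q * h + h ^ 2 / 8 := by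
    simp only [hF] at key; linarith
  simpa [hD] using this

lemma mgf_le (p Y : F4 → ℝ) (hpos : ∀ x, 0 ≤ p x) (hsum : ∑ x, p x = 1)
    (a b : ℝ) (hab : a < b) (hYa : ∀ x, a ≤ Y x) (hYb : ∀ x, Y x ≤ b) (t : ℝ) :
    ∑ x, p x * Real.exp (t * (Y x - ∑ y, p y * Y y)) ≤ Real.exp (t ^ 2 * (b - a) ^ 2 / 8) := by
  set μ := ∑ y, p y * Y y with hμ
  have hba : (0:ℝ) < b - a := by linarith
  have hμa : a ≤ μ := by
    calc a = ∑ y, p y * a := by rw [← Finset.sum_mul, hsum, one_mul]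
    _ ≤ μ := Finset.sum_le_sum fun y _ => mul_le_mul_of_nonneg_left (hYa y) (hpos y)
  have hμb : μ ≤ b := by
    calc μ ≤ ∑ y, p y * b := Finset.sum_le_sum fun y _ => mul_le_mul_of_nonneg_left (hYb y) (hpos y)
    _ = b := by rw [← Finset.sum_mul, hsum, one_mul]
  set π := (μ - a) / (b - a) with hπ
  have hπ0 : 0 ≤ π := div_nonneg (by linarith) hba.le
  have hπ1 : π ≤ 1 := by rw [div_le_one hba]; linarith
  set A := Real.exp (t * a) with hA
  set B := Real.exp (t * b) with hB
  -- pointwise convexity bound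
  have hconv : ∀ x, Real.exp (t * Y x) ≤ (b - Y x) / (b - a) * A + (Y x - a) / (b - a) * B := by
    intro x
    have h1 : (0:ℝ) ≤ (b - Y x) / (b - a) := div_nonneg (by linarith [hYb x]) hba.le
    have h2 : (0:ℝ) ≤ (Y x - a) / (b - a) := div_nonneg (by linarith [hYa x]) hba.le
    have h3 : (b - Y x) / (b - a) + (Y x - a) / (b - a) = 1 := by field_simp; ring
    have := convexOn_exp.2 (Set.mem_univ (t * a)) (Set.mem_univ (t * b)) h1 h2 h3
    simp only [smul_eq_mul] at this
    have harg : (b - Y x) / (b - a) * (t * a) + (Y x - a) / (b - a) * (t * b) = t * Y x := by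
      field_simp; ring
    rwa [harg] at this
  have step1 : ∑ x, p x * Real.exp (t * Y x) ≤ (1 - π) * A + π * B := by
    have hle : ∑ x, p x * Real.exp (t * Y x)
        ≤ ∑ x, p x * ((b - Y x) / (b - a) * A + (Y x - a) / (b - a) * B) :=
      Finset.sum_le_sum fun x _ => mul_le_mul_of_nonneg_left (hconv x) (hpos x)
    refine hle.trans (le_of_eq ?_)
    have : ∀ x : F4, p x * ((b - Y x) / (b - a) * A + (Y x - a) / (b - a) * B)
        = (p x * b - p x * Y x) * (A / (b - a)) + (p x * Y x - p x * a) * (B / (b - a)) := by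
      intro x; field_simp
    rw [Finset.sum_congr rfl fun x _ => this x]
    rw [Finset.sum_add_distrib, ← Finset.sum_mul, ← Finset.sum_mul,
      Finset.sum_sub_distrib, Finset.sum_sub_distrib, ← Finset.sum_mul, ← Finset.sum_mul,
      hsum, one_mul, one_mul, ← hμ]
    have h1π : 1 - π = (b - μ) / (b - a) := by rw [hπ]; field_simp; ring
    rw [h1π, hπ]
    have hbne : b - a ≠ 0 := hba.ne'
    field_simp
  -- shift by μ
  have hshift : ∑ x, p x * Real.exp (t * (Y x - μ))
      = (∑ x, p x * Real.exp (t * Y x)) * Real.exp (-(t * μ)) := by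
    rw [Finset.sum_mul]
    refine Finset.sum_congr rfl fun x _ => ?_
    rw [mul_assoc, ← Real.exp_add]
    ring_nf
  rw [hshift]
  set h := t * (b - a) with hh
  have hexp_pos : (0:ℝ) < Real.exp (-(t*μ)) := Real.exp_pos _
  have step2 : (∑ x, p x * Real.exp (t * Y x)) * Real.exp (-(t * μ))
      ≤ ((1 - π) * A + π * B) * Real.exp (-(t * μ)) :=
    mul_le_mul_of_nonneg_right step1 hexp_pos.le
  refine step2.trans ?_
  have hbne : b - a ≠ 0 := hba.ne'
  have e1 : A * Real.exp (-(t * μ)) = Real.exp (-(π * h)) := by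
    rw [hA, ← Real.exp_add]; congr 1; rw [hπ, hh]; field_simp; ring
  have e2 : B * Real.exp (-(t * μ)) = Real.exp h * Real.exp (-(π * h)) := by
    rw [hB, ← Real.exp_add, ← Real.exp_add]; congr 1; rw [hπ, hh]; field_simp; ring
  have hkey : ((1 - π) * A + π * B) * Real.exp (-(t * μ))
      = Real.exp (-(π * h)) * (1 - π + π * Real.exp h) := by
    calc ((1 - π) * A + π * B) * Real.exp (-(t * μ))
        = (1 - π) * (A * Real.exp (-(t * μ))) + π * (B * Real.exp (-(t * μ))) := by ring
      _ = (1 - π) * Real.exp (-(π * h)) + π * (Real.exp h * Real.exp (-(π * h))) := by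
          rw [e1, e2]
      _ = Real.exp (-(π * h)) * (1 - π + π * Real.exp h) := by ring
  rw [hkey]
  have hLpos : (0:ℝ) < 1 - π + π * Real.exp h := by
    rcases eq_or_lt_of_le hπ0 with h' | h'
    · simp [← h']
    · nlinarith [Real.exp_pos h]
  have := L_bound π h hπ0 hπ1
  have hle2 : 1 - π + π * Real.exp h ≤ Real.exp (π * h + h ^ 2 / 8) := by
    rw [← Real.exp_log hLpos]
    exact Real.exp_le_exp.2 this
  calc Real.exp (-(π * h)) * (1 - π + π * Real.exp h)
      ≤ Real.exp (-(π * h)) * Real.exp (π * h + h ^ 2 / 8) :=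
        mul_le_mul_of_nonneg_left hle2 (Real.exp_pos _).le
    _ = Real.exp (h ^ 2 / 8) := by rw [← Real.exp_add]; ring_nf
    _ = Real.exp (t ^ 2 * (b - a) ^ 2 / 8) := by rw [hh]; ring_nf

lemma tail (p Y : F4 → ℝ) (hpos : ∀ x, 0 ≤ p x) (hsum : ∑ x, p x = 1)
    (a b : ℝ) (hab : a < b) (hYa : ∀ x, a ≤ Y x) (hYb : ∀ x, Y x ≤ b)
    (t c : ℝ) (ht : 0 ≤ t) (N : ℕ) :
    ∑ m ∈ Finset.univ.filter
        (fun m : Fin N → F4 => c ≤ (∑ n, Y (m n)) - N * (∑ x, p x * Y x)),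
      ∏ n, p (m n)
    ≤ Real.exp (-(t * c)) * Real.exp (t ^ 2 * (b - a) ^ 2 / 8) ^ N := by
  set μ := ∑ x, p x * Y x with hμ
  set f : F4 → ℝ := fun x => p x * Real.exp (t * (Y x - μ)) with hf
  have hfnn : ∀ x, 0 ≤ f x := fun x => mul_nonneg (hpos x) (Real.exp_pos _).le
  have key1 : ∀ m ∈ Finset.univ.filter
      (fun m : Fin N → F4 => c ≤ (∑ n, Y (m n)) - N * μ),
      ∏ n, p (m n) ≤ Real.exp (-(t * c)) * ∏ n, f (m n) := by
    intro m hm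
    have hc : c ≤ (∑ n, Y (m n)) - N * μ := (Finset.mem_filter.1 hm).2
    have hprod : ∏ n, f (m n)
        = (∏ n, p (m n)) * Real.exp (t * ((∑ n, Y (m n)) - N * μ)) := by
      rw [hf]
      rw [Finset.prod_mul_distrib, ← Real.exp_sum]
      congr 2
      rw [← Finset.mul_sum, Finset.sum_sub_distrib, Finset.sum_const,
        Finset.card_univ, Fintype.card_fin, nsmul_eq_mul]
    rw [hprod, ← mul_assoc, mul_comm (Real.exp _), mul_assoc, ← Real.exp_add]
    have h1 : (1:ℝ) ≤ Real.exp (t * ((∑ n, Y (m n)) - N * μ) + -(t * c)) := by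
      rw [Real.one_le_exp_iff]
      have : 0 ≤ t * ((∑ n, Y (m n)) - N * μ - c) := mul_nonneg ht (by linarith)
      nlinarith
    calc ∏ n, p (m n) = (∏ n, p (m n)) * 1 := (mul_one _).symm
      _ ≤ (∏ n, p (m n)) * Real.exp (t * ((∑ n, Y (m n)) - N * μ) + -(t * c)) :=
          mul_le_mul_of_nonneg_left h1 (Finset.prod_nonneg fun n _ => hpos _)
      _ = _ := by rw [add_comm]
  calc ∑ m ∈ Finset.univ.filter
        (fun m : Fin N → F4 => c ≤ (∑ n, Y (m n)) - N * μ), ∏ n, p (m n)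
      ≤ ∑ m ∈ Finset.univ.filter
        (fun m : Fin N → F4 => c ≤ (∑ n, Y (m n)) - N * μ),
          Real.exp (-(t * c)) * ∏ n, f (m n) := Finset.sum_le_sum key1
    _ ≤ ∑ m : Fin N → F4, Real.exp (-(t * c)) * ∏ n, f (m n) := by
        apply Finset.sum_le_sum_of_subset_of_nonneg (Finset.filter_subset _ _)
        intro m _ _
        exact mul_nonneg (Real.exp_pos _).le (Finset.prod_nonneg fun n _ => hfnn _)
    _ = Real.exp (-(t * c)) * ∑ m : Fin N → F4, ∏ n, f (m n) := by
        rw [Finset.mul_sum]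
    _ = Real.exp (-(t * c)) * (∑ x, f x) ^ N := by rw [Fintype.sum_pow]
    _ ≤ Real.exp (-(t * c)) * Real.exp (t ^ 2 * (b - a) ^ 2 / 8) ^ N := by
        apply mul_le_mul_of_nonneg_left _ (Real.exp_pos _).le
        apply pow_le_pow_left₀ (Finset.sum_nonneg fun x _ => hfnn x)
        exact mgf_le p Y hpos hsum a b hab hYa hYb t

/-- for any `X ⊆ (F_2^2)^N` with `|X| = 2^N`,
`∑_{m∈X} q_m < 2^{N(1−H(p)+ε)} + 2 exp(−2ε²N/Δ²)`. -/
theorem stmt8 (p : F4 → ℝ) (hpos : ∀ x, 0 < p x) (hsum : ∑ x, p x = 1)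
    (hΔ : 0 < Δ4 p) (ε : ℝ) (hε : 0 < ε) (N : ℕ)
    (X : Finset (Fin N → F4)) (hX : X.card = 2 ^ N) :
    ∑ m ∈ X, qprod p m <
      2 ^ ((N : ℝ) * (1 - H4 p + ε)) +
        2 * Real.exp (-2 * ε ^ 2 * N / (Δ4 p) ^ 2) := by
  have h2 : (1:ℝ) < 2 := one_lt_two
  -- the random variable and its bounds
  set Y : F4 → ℝ := fun x => -Real.logb 2 (p x) with hY
  set a : ℝ := -Real.logb 2 (Finset.univ.sup' Finset.univ_nonempty p) with ha
  set b : ℝ := -Real.logb 2 (Finset.univ.inf' Finset.univ_nonempty p) with hb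
  have hba : b - a = Δ4 p := by rw [ha, hb, Δ4]; ring
  have hab : a < b := by
    have : 0 < b - a := hba ▸ hΔ
    linarith
  obtain ⟨xi, -, hxi⟩ := Finset.exists_mem_eq_inf' (Finset.univ_nonempty) p
  obtain ⟨xs, -, hxs⟩ := Finset.exists_mem_eq_sup' (Finset.univ_nonempty) p
  have hinfpos : 0 < Finset.univ.inf' Finset.univ_nonempty p := hxi ▸ hpos xi
  have hYa : ∀ x, a ≤ Y x := by
    intro x
    have h1 : p x ≤ Finset.univ.sup' Finset.univ_nonempty p := Finset.le_sup' p (Finset.mem_univ x)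
    have := Real.logb_le_logb_of_le one_lt_two (hpos x) h1
    simp only [hY, ha]
    linarith
  have hYb : ∀ x, Y x ≤ b := by
    intro x
    have h1 : Finset.univ.inf' Finset.univ_nonempty p ≤ p x := Finset.inf'_le p (Finset.mem_univ x)
    have := Real.logb_le_logb_of_le one_lt_two hinfpos h1
    simp only [hY, hb]
    linarith
  have hμ : ∑ x, p x * Y x = H4 p := by
    simp [hY, H4, mul_neg]
  -- relation between sums of Y and logb of qprod
  have hqpos : ∀ m : Fin N → F4, 0 < qprod p m := fun m => Finset.prod_pos fun n _ => hpos _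
  have hS : ∀ m : Fin N → F4, ∑ n, Y (m n) = -Real.logb 2 (qprod p m) := by
    intro m
    rw [qprod, Real.logb_prod _ _ (fun n _ => (hpos _).ne')]
    simp [hY]
  -- case N = 0
  rcases Nat.eq_zero_or_pos N with hN0 | hN
  · subst hN0
    have hcard1 : Fintype.card (Fin 0 → F4) = 1 := by simp
    have hXuniv : X = Finset.univ := Finset.eq_univ_of_card X (by simp [hX, hcard1])
    have hsum1 : ∑ m ∈ X, qprod p m = 1 := by
      rw [hXuniv]
      simp [qprod, hcard1]
    rw [hsum1]
    have h1 : ((0:ℕ):ℝ) * (1 - H4 p + ε) = 0 := by norm_num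
    rw [h1, Real.rpow_zero]
    have h2 : -2 * ε ^ 2 * ((0:ℕ):ℝ) / Δ4 p ^ 2 = 0 := by norm_num
    rw [h2, Real.exp_zero]
    norm_num
  -- main case
  have hNR : (0:ℝ) < N := by exact_mod_cast hN
  have hNe : (N:ℝ) ≠ 0 := hNR.ne'
  set T := typFinset N p ε with hT
  -- Part A: pointwise bound on typical set
  have htypA : ∀ m ∈ X ∩ T, qprod p m < (2:ℝ) ^ ((N:ℝ) * (ε - H4 p)) := by
    intro m hm
    have hmT : m ∈ T := (Finset.mem_inter.1 hm).2
    have habs : |(-(1 / N : ℝ)) * Real.logb 2 (qprod p m) - H4 p| < ε := by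
      rw [hT, typFinset, Finset.mem_filter] at hmT
      exact hmT.2
    have h1 : -ε < (-(1 / N : ℝ)) * Real.logb 2 (qprod p m) - H4 p := (abs_lt.1 habs).1
    set L := Real.logb 2 (qprod p m) with hLdef
    have h2 : (N:ℝ) * (-ε) < (N:ℝ) * ((-(1 / N : ℝ)) * L - H4 p) :=
      mul_lt_mul_of_pos_left h1 hNR
    have h3 : (N:ℝ) * ((-(1 / N : ℝ)) * L - H4 p) = -L - N * H4 p := by
      field_simp
    have hL : L < (N:ℝ) * (ε - H4 p) := by
      rw [h3] at h2
      nlinarith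
    calc qprod p m = (2:ℝ) ^ L := (Real.rpow_logb two_pos (by norm_num) (hqpos m)).symm
      _ < (2:ℝ) ^ ((N:ℝ) * (ε - H4 p)) := by
          exact (Real.rpow_lt_rpow_left_iff one_lt_two).2 hL
  -- Part B: tail bound
  set t : ℝ := 4 * ε / (b - a) ^ 2 with htdef
  have hbapos : (0:ℝ) < b - a := by linarith
  have htnn : 0 ≤ t := by positivity
  have hUb := tail p Y (fun x => (hpos x).le) hsum a b hab hYa hYb t ((N:ℝ) * ε) htnn N
  have hLb := tail p (fun x => -Y x) (fun x => (hpos x).le) hsum (-b) (-a) (by linarith)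
    (fun x => neg_le_neg (hYb x)) (fun x => neg_le_neg (hYa x)) t ((N:ℝ) * ε) htnn N
  have hval : Real.exp (-(t * ((N:ℝ) * ε))) * Real.exp (t ^ 2 * (b - a) ^ 2 / 8) ^ N
      = Real.exp (-2 * ε ^ 2 * N / (Δ4 p) ^ 2) := by
    rw [← Real.exp_nat_mul, ← Real.exp_add]
    congr 1
    rw [← hba, htdef]
    field_simp
    ring
  have hval2 : Real.exp (-(t * ((N:ℝ) * ε))) * Real.exp (t ^ 2 * (-a - -b) ^ 2 / 8) ^ N
      = Real.exp (-2 * ε ^ 2 * N / (Δ4 p) ^ 2) := by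
    rw [← hval]
    congr 3
    ring
  rw [hval] at hUb
  rw [hval2] at hLb
  set U := Finset.univ.filter
    (fun m : Fin N → F4 => (N:ℝ) * ε ≤ (∑ n, Y (m n)) - N * (∑ x, p x * Y x)) with hUdef
  set Lo := Finset.univ.filter
    (fun m : Fin N → F4 =>
      (N:ℝ) * ε ≤ (∑ n, (fun x => -Y x) (m n)) - N * (∑ x, p x * (fun x => -Y x) x)) with hLodef
  have hsplit : ∀ m ∈ X \ T, m ∈ U ∪ Lo := by
    intro m hm
    have hmnT : m ∉ T := (Finset.mem_sdiff.1 hm).2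
    have habs : ε ≤ |(-(1 / N : ℝ)) * Real.logb 2 (qprod p m) - H4 p| := by
      by_contra hcon
      exact hmnT (by rw [hT, typFinset, Finset.mem_filter]; exact ⟨Finset.mem_univ m, not_le.1 hcon⟩)
    set L := Real.logb 2 (qprod p m) with hLdef
    set z := (-(1 / N : ℝ)) * L - H4 p with hz
    have hSm : ∑ n, Y (m n) = -L := hS m
    rcases le_abs.1 habs with hcase | hcase
    · apply Finset.mem_union_left
      rw [hUdef, Finset.mem_filter]
      refine ⟨Finset.mem_univ m, ?_⟩
      rw [hSm, hμ]
      have h2 : (N:ℝ) * ε ≤ (N:ℝ) * z := mul_le_mul_of_nonneg_left hcase hNR.le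
      have h3 : (N:ℝ) * z = -L - N * H4 p := by
        rw [hz]
        field_simp
      linarith
    · apply Finset.mem_union_right
      rw [hLodef, Finset.mem_filter]
      refine ⟨Finset.mem_univ m, ?_⟩
      have e1 : ∑ n, (fun x => -Y x) (m n) = -(∑ n, Y (m n)) := by simp
      have e2 : ∑ x, p x * (fun x => -Y x) x = -(∑ x, p x * Y x) := by simp [mul_neg]
      rw [e1, e2, hSm, hμ]
      have h2 : (N:ℝ) * ε ≤ (N:ℝ) * (-z) := mul_le_mul_of_nonneg_left hcase hNR.le
      have h3 : (N:ℝ) * (-z) = L + N * H4 p := by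
        rw [hz]
        field_simp
        ring
      linarith
  have hB : ∑ m ∈ X \ T, qprod p m ≤ 2 * Real.exp (-2 * ε ^ 2 * N / (Δ4 p) ^ 2) := by
    have h1 : ∑ m ∈ X \ T, qprod p m ≤ ∑ m ∈ U ∪ Lo, qprod p m :=
      Finset.sum_le_sum_of_subset_of_nonneg hsplit (fun m _ _ => (hqpos m).le)
    have h2 : ∑ m ∈ U ∪ Lo, qprod p m ≤ ∑ m ∈ U, qprod p m + ∑ m ∈ Lo, qprod p m := by
      have h3 : ∑ m ∈ U ∪ Lo, qprod p m + ∑ m ∈ U ∩ Lo, qprod p m = ∑ m ∈ U, qprod p m + ∑ m ∈ Lo, qprod p m := Finset.sum_union_inter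
      have hnn : 0 ≤ ∑ m ∈ U ∩ Lo, qprod p m := Finset.sum_nonneg fun m _ => (hqpos m).le
      linarith
    have hU' : ∑ m ∈ U, qprod p m ≤ Real.exp (-2 * ε ^ 2 * N / (Δ4 p) ^ 2) := by
      refine le_trans (le_of_eq ?_) hUb
      rw [hUdef]
      exact Finset.sum_congr rfl fun m _ => rfl
    have hLo' : ∑ m ∈ Lo, qprod p m ≤ Real.exp (-2 * ε ^ 2 * N / (Δ4 p) ^ 2) := by
      refine le_trans (le_of_eq ?_) hLb
      rw [hLodef]
      exact Finset.sum_congr rfl fun m _ => rfl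
    linarith
  have hsplitsum : ∑ m ∈ X ∩ T, qprod p m + ∑ m ∈ X \ T, qprod p m = ∑ m ∈ X, qprod p m :=
    Finset.sum_inter_add_sum_sdiff X T (qprod p)
  rcases Finset.eq_empty_or_nonempty (X ∩ T) with he | hne
  · rw [← hsplitsum, he, Finset.sum_empty, zero_add]
    have hpow : (0:ℝ) < (2:ℝ) ^ ((N:ℝ) * (1 - H4 p + ε)) := Real.rpow_pos_of_pos two_pos _
    linarith
  · have hA : ∑ m ∈ X ∩ T, qprod p m < (2:ℝ) ^ ((N:ℝ) * (1 - H4 p + ε)) := by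
      have h1 : ∑ m ∈ X ∩ T, qprod p m
          < ∑ _m ∈ X ∩ T, (2:ℝ) ^ ((N:ℝ) * (ε - H4 p)) :=
        Finset.sum_lt_sum_of_nonempty hne htypA
      rw [Finset.sum_const, nsmul_eq_mul] at h1
      have hcard : ((X ∩ T).card : ℝ) ≤ (2:ℝ) ^ N := by
        have hc1 : (X ∩ T).card ≤ X.card :=
          Finset.card_le_card (Finset.inter_subset_left : X ∩ T ⊆ X)
        rw [hX] at hc1
        exact_mod_cast hc1
      have hrnn : (0:ℝ) ≤ (2:ℝ) ^ ((N:ℝ) * (ε - H4 p)) := (Real.rpow_pos_of_pos two_pos _).le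
      have hpow2 : ((X ∩ T).card : ℝ) * (2:ℝ) ^ ((N:ℝ) * (ε - H4 p))
          ≤ (2:ℝ) ^ N * (2:ℝ) ^ ((N:ℝ) * (ε - H4 p)) := mul_le_mul_of_nonneg_right hcard hrnn
      have hid : (2:ℝ) ^ (N:ℕ) * (2:ℝ) ^ ((N:ℝ) * (ε - H4 p))
          = (2:ℝ) ^ ((N:ℝ) * (1 - H4 p + ε)) := by
        rw [← Real.rpow_natCast 2 N, ← Real.rpow_add two_pos]
        congr 1
        ring
      linarith
    have hnn2 : 0 ≤ ∑ m ∈ X \ T, qprod p m := Finset.sum_nonneg fun m _ => (hqpos m).le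
    linarith
end

section
/- Let p be a probability vector on F_2^2 with all entries positive and H(p) > 1, where H(p) = -∑_x p_x log₂ p_x. For m ∈ (F_2^2)^N set q_m = ∏_n p_{m_n}, and define f(N) = max over subsets X ⊆ (F_2^2)^N with |X| = 2^N of ∑_{m∈X} q_m. Then f(N) → 0 as N → ∞. -/
open scoped Classical

/- ### Auxiliary lemmas: moments of the product distribution -/

lemma sum_pi_succ' {N : ℕ} (f : (Fin (N + 1) → F4) → ℝ) :
    ∑ m : Fin (N + 1) → F4, f m = ∑ x : F4, ∑ m : Fin N → F4, f (Fin.cons x m) := by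
  rw [show (∑ m : Fin (N + 1) → F4, f m)
      = ∑ q : F4 × (Fin N → F4), f (Fin.cons q.1 q.2) from
    (Fintype.sum_equiv (Fin.consEquiv fun _ => F4) _ _ fun q => rfl).symm,
    Fintype.sum_prod_type]

lemma qprod_cons' {N : ℕ} (p : F4 → ℝ) (x : F4) (m : Fin N → F4) :
    qprod p (Fin.cons x m : Fin (N + 1) → F4) = p x * qprod p m := by
  simp [qprod, Fin.prod_univ_succ]

lemma momA' (p : F4 → ℝ) (hsum : ∑ x, p x = 1) (N : ℕ) :
    ∑ m : Fin N → F4, qprod p m = 1 := by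
  induction N with
  | zero => simp [qprod]
  | succ N ih =>
    rw [sum_pi_succ']
    simp only [qprod_cons', ← Finset.mul_sum, ih, mul_one, hsum]

lemma momB' (p g : F4 → ℝ) (μ : ℝ) (hsum : ∑ x, p x = 1)
    (hμ : ∑ x, p x * g x = μ) (N : ℕ) :
    ∑ m : Fin N → F4, qprod p m * ((∑ n, g (m n)) - N * μ) = 0 := by
  induction N with
  | zero => simp [qprod]
  | succ N ih =>
    rw [sum_pi_succ']
    have expand : ∀ (x : F4) (m : Fin N → F4),
        qprod p (Fin.cons x m : Fin (N + 1) → F4) *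
            ((∑ n, g ((Fin.cons x m : Fin (N + 1) → F4) n)) - (N + 1 : ℕ) * μ)
          = p x * (g x - μ) * qprod p m
            + p x * (qprod p m * ((∑ n, g (m n)) - N * μ)) := by
      intro x m
      rw [qprod_cons', Fin.sum_univ_succ]
      simp only [Fin.cons_zero, Fin.cons_succ]
      push_cast
      ring
    simp only [expand, Finset.sum_add_distrib, ← Finset.mul_sum, momA' p hsum, ih,
      mul_one, mul_zero, Finset.sum_const_zero, add_zero]
    have : ∑ x : F4, p x * (g x - μ) = 0 := by
      simp only [mul_sub, Finset.sum_sub_distrib, hμ, ← Finset.sum_mul, hsum, one_mul,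
        sub_self]
    simpa using this

lemma momC' (p g : F4 → ℝ) (μ σ2 : ℝ) (hsum : ∑ x, p x = 1)
    (hμ : ∑ x, p x * g x = μ) (hσ : ∑ x, p x * (g x - μ) ^ 2 = σ2) (N : ℕ) :
    ∑ m : Fin N → F4, qprod p m * ((∑ n, g (m n)) - N * μ) ^ 2 = N * σ2 := by
  induction N with
  | zero => simp [qprod]
  | succ N ih =>
    rw [sum_pi_succ']
    have expand : ∀ (x : F4) (m : Fin N → F4),
        qprod p (Fin.cons x m : Fin (N + 1) → F4) *
            ((∑ n, g ((Fin.cons x m : Fin (N + 1) → F4) n)) - (N + 1 : ℕ) * μ) ^ 2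
          = p x * (g x - μ) ^ 2 * qprod p m
            + 2 * (g x - μ) * (p x * (qprod p m * ((∑ n, g (m n)) - N * μ)))
            + p x * (qprod p m * ((∑ n, g (m n)) - N * μ) ^ 2) := by
      intro x m
      rw [qprod_cons', Fin.sum_univ_succ]
      simp only [Fin.cons_zero, Fin.cons_succ]
      push_cast
      ring
    simp only [expand, Finset.sum_add_distrib, ← Finset.mul_sum, momA' p hsum, ih,
      momB' p g μ hsum hμ, mul_one, mul_zero, Finset.sum_const_zero, add_zero]
    rw [hσ, ← Finset.sum_mul, hsum]
    push_cast
    ring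

/-- if `H(p) > 1`, then
`f(N) = max_{X ⊆ (F_2^2)^N, |X| = 2^N} ∑_{m∈X} q_m → 0` as `N → ∞`. -/
theorem stmt9 (p : F4 → ℝ) (hpos : ∀ x, 0 < p x) (hsum : ∑ x, p x = 1)
    (hH : 1 < H4 p) :
    ∀ δ > (0 : ℝ), ∃ N₀ : ℕ, ∀ N ≥ N₀, ∀ X : Finset (Fin N → F4),
      X.card = 2 ^ N → ∑ m ∈ X, qprod p m < δ := by
  intro δ hδ
  set g : F4 → ℝ := fun x => -Real.logb 2 (p x) with hg
  set μ : ℝ := H4 p with hμdef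
  have hμ : ∑ x, p x * g x = μ := by
    simp only [hg, mul_neg, Finset.sum_neg_distrib, hμdef, H4]
  set σ2 : ℝ := ∑ x, p x * (g x - μ) ^ 2 with hσdef
  have hσnn : 0 ≤ σ2 := Finset.sum_nonneg fun x _ => mul_nonneg (hpos x).le (sq_nonneg _)
  have hμ1 : 1 < μ := hH
  set ε : ℝ := (μ - 1) / 2 with hεdef
  have hε : 0 < ε := by rw [hεdef]; linarith
  set r : ℝ := (2 : ℝ) ^ (1 - μ + ε) with hrdef
  have hr0 : 0 ≤ r := (Real.rpow_pos_of_pos two_pos _).le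
  have hr1 : r < 1 := by
    apply Real.rpow_lt_one_of_one_lt_of_neg one_lt_two
    rw [hεdef]; linarith
  obtain ⟨N₁, hN₁⟩ := Filter.eventually_atTop.mp
    ((tendsto_pow_atTop_nhds_zero_of_lt_one hr0 hr1).eventually
      (gt_mem_nhds (half_pos hδ)))
  obtain ⟨N₂, hN₂⟩ := exists_nat_gt (2 * σ2 / (δ * ε ^ 2))
  refine ⟨max (max N₁ N₂) 1, fun N hN X hX => ?_⟩
  have hN1 : 1 ≤ N := le_trans (le_max_right _ _) hN
  have hNN₁ : N₁ ≤ N := le_trans (le_trans (le_max_left _ _) (le_max_left _ _)) hN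
  have hNN₂ : N₂ ≤ N := le_trans (le_trans (le_max_right _ _) (le_max_left _ _)) hN
  have hNpos : (0 : ℝ) < N := by exact_mod_cast hN1
  have hq0 : ∀ m : Fin N → F4, 0 < qprod p m := fun m =>
    Finset.prod_pos fun n _ => hpos _
  have hlogq : ∀ m : Fin N → F4, Real.logb 2 (qprod p m) = -∑ n, g (m n) := by
    intro m
    rw [qprod, Real.logb_prod _ _ (fun n _ => (hpos _).ne')]
    simp [hg]
  have hTmem : ∀ m : Fin N → F4,
      m ∈ typFinset N p ε ↔ |(N : ℝ)⁻¹ * (∑ n, g (m n)) - μ| < ε := by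
    intro m
    simp only [typFinset, Finset.mem_filter, Finset.mem_univ, true_and, hlogq m]
    rw [show (-(1 / N : ℝ)) * -(∑ n, g (m n)) = (N : ℝ)⁻¹ * (∑ n, g (m n)) by ring]
  -- typical part
  have htypS : ∀ m ∈ typFinset N p ε, N * (μ - ε) < ∑ n, g (m n) := by
    intro m hm
    rw [hTmem m] at hm
    have h1 := (abs_lt.mp hm).1
    have h2 : μ - ε < (N : ℝ)⁻¹ * (∑ n, g (m n)) := by linarith
    calc (N : ℝ) * (μ - ε) < (N : ℝ) * ((N : ℝ)⁻¹ * (∑ n, g (m n))) :=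
          (mul_lt_mul_iff_right₀ hNpos).mpr h2
      _ = ∑ n, g (m n) := by
          rw [← mul_assoc, mul_inv_cancel₀ hNpos.ne', one_mul]
  have hqbound : ∀ m ∈ typFinset N p ε,
      qprod p m ≤ (2 : ℝ) ^ (-((N : ℝ) * (μ - ε))) := by
    intro m hm
    rw [show qprod p m = (2 : ℝ) ^ Real.logb 2 (qprod p m) from
      (Real.rpow_logb two_pos (by norm_num) (hq0 m)).symm, hlogq m]
    exact (Real.rpow_le_rpow_left_iff one_lt_two).mpr (by linarith [htypS m hm])
  have hsumtyp : ∑ m ∈ X ∩ typFinset N p ε, qprod p m ≤ r ^ N := by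
    have hb : (0 : ℝ) ≤ (2 : ℝ) ^ (-((N : ℝ) * (μ - ε))) :=
      (Real.rpow_pos_of_pos two_pos _).le
    have h1 : ∑ m ∈ X ∩ typFinset N p ε, qprod p m
        ≤ (X ∩ typFinset N p ε).card • (2 : ℝ) ^ (-((N : ℝ) * (μ - ε))) :=
      Finset.sum_le_card_nsmul _ _ _ fun m hm =>
        hqbound m (Finset.mem_of_mem_inter_right hm)
    have hcard : ((X ∩ typFinset N p ε).card : ℝ) ≤ (2 : ℝ) ^ N := by
      have := Finset.card_le_card (Finset.inter_subset_left (s₁ := X)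
        (s₂ := typFinset N p ε))
      rw [hX] at this
      exact_mod_cast this
    have h2 : ((X ∩ typFinset N p ε).card : ℝ) * (2 : ℝ) ^ (-((N : ℝ) * (μ - ε)))
        ≤ (2 : ℝ) ^ N * (2 : ℝ) ^ (-((N : ℝ) * (μ - ε))) :=
      mul_le_mul_of_nonneg_right hcard hb
    have heq : (2 : ℝ) ^ N * (2 : ℝ) ^ (-((N : ℝ) * (μ - ε))) = r ^ N := by
      rw [← Real.rpow_natCast (2 : ℝ) N, ← Real.rpow_add two_pos,
        ← Real.rpow_natCast r N, hrdef, ← Real.rpow_mul (by norm_num : (0:ℝ) ≤ 2)]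
      congr 1
      ring
    rw [nsmul_eq_mul] at h1
    linarith
  -- atypical part: Chebyshev
  have cheb : ∑ m ∈ Finset.univ.filter (fun m => m ∉ typFinset N p ε), qprod p m
      ≤ σ2 / ((N : ℝ) * ε ^ 2) := by
    set A := Finset.univ.filter (fun m : Fin N → F4 => m ∉ typFinset N p ε) with hA
    have hlow : ∀ m ∈ A, ((N : ℝ) * ε) ^ 2 ≤ ((∑ n, g (m n)) - N * μ) ^ 2 := by
      intro m hm
      have hm' : m ∉ typFinset N p ε := (Finset.mem_filter.mp hm).2
      rw [hTmem m] at hm'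
      have h1 : ε ≤ |(N : ℝ)⁻¹ * (∑ n, g (m n)) - μ| := not_lt.mp hm'
      have h2 : (N : ℝ) * ε ≤ (N : ℝ) * |(N : ℝ)⁻¹ * (∑ n, g (m n)) - μ| :=
        (mul_le_mul_iff_right₀ hNpos).mpr h1
      have h3 : (N : ℝ) * |(N : ℝ)⁻¹ * (∑ n, g (m n)) - μ|
          = |(∑ n, g (m n)) - N * μ| := by
        rw [← abs_of_pos hNpos, ← abs_mul]
        congr 1
        field_simp
        rw [abs_of_pos hNpos]
      rw [h3] at h2
      calc ((N : ℝ) * ε) ^ 2 ≤ |(∑ n, g (m n)) - N * μ| ^ 2 := by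
            apply pow_le_pow_left₀ (by positivity) h2
        _ = ((∑ n, g (m n)) - N * μ) ^ 2 := sq_abs _
    have hkey : ((N : ℝ) * ε) ^ 2 * ∑ m ∈ A, qprod p m ≤ (N : ℝ) * σ2 := by
      rw [← momC' p g μ σ2 hsum hμ hσdef.symm N, Finset.mul_sum]
      refine le_trans (Finset.sum_le_sum fun m hm => ?_)
        (Finset.sum_le_sum_of_subset_of_nonneg (Finset.subset_univ A)
          fun m _ _ => mul_nonneg (hq0 m).le (sq_nonneg _))
      have := hlow m hm
      have hq := (hq0 m).le
      calc ((N : ℝ) * ε) ^ 2 * qprod p m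
          ≤ ((∑ n, g (m n)) - N * μ) ^ 2 * qprod p m :=
            mul_le_mul_of_nonneg_right this hq
        _ = qprod p m * ((∑ n, g (m n)) - N * μ) ^ 2 := by ring
    have hpos2 : (0 : ℝ) < ((N : ℝ) * ε) ^ 2 := by positivity
    rw [div_eq_mul_inv]
    rw [← le_div_iff₀' hpos2] at hkey
    calc ∑ m ∈ A, qprod p m ≤ (N : ℝ) * σ2 / ((N : ℝ) * ε) ^ 2 := hkey
      _ = σ2 * ((N : ℝ) * ε ^ 2)⁻¹ := by
          field_simp
  -- combine
  have hsplit : ∑ m ∈ X, qprod p m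
      = (∑ m ∈ X ∩ typFinset N p ε, qprod p m)
        + ∑ m ∈ X \ typFinset N p ε, qprod p m :=
    (Finset.sum_inter_add_sum_sdiff X (typFinset N p ε) _).symm
  have hdiff : ∑ m ∈ X \ typFinset N p ε, qprod p m
      ≤ ∑ m ∈ Finset.univ.filter (fun m => m ∉ typFinset N p ε), qprod p m := by
    apply Finset.sum_le_sum_of_subset_of_nonneg
    · intro m hm
      rw [Finset.mem_filter]
      exact ⟨Finset.mem_univ m, (Finset.mem_sdiff.mp hm).2⟩
    · intro m _ _
      exact (hq0 m).le
  have h1 : r ^ N < δ / 2 := hN₁ N hNN₁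
  have h2 : σ2 / ((N : ℝ) * ε ^ 2) < δ / 2 := by
    have hN₂' : 2 * σ2 / (δ * ε ^ 2) < (N : ℝ) := by
      calc 2 * σ2 / (δ * ε ^ 2) < (N₂ : ℝ) := hN₂
        _ ≤ (N : ℝ) := by exact_mod_cast hNN₂
    rw [div_lt_iff₀ (by positivity)] at hN₂'
    rw [div_lt_iff₀ (by positivity)]
    nlinarith
  linarith [hsplit, hdiff, hsumtyp, cheb,
    le_trans hdiff cheb]
end

section
/- Let p be a probability vector on F_2^2 with all entries positive, H(p) < 1, and Δ = log₂(max p_x) − log₂(min p_x) > 0. For m ∈ (F_2^2)^N set q_m = ∏ p_{m_n} ≅ q on F_2^{2N}. Suppose a subspace C ⊆ F_2^{2N} of dimension N is chosen uniformly at random among symplectic self-dual subspaces, and define the failure event weight F(C) = ∑_{m ∈ T(ε)} q_m · 1[∃ m' ≠ m : q_{m'} ≥ q_m and m + m' ∈ C]. Then for any ε > 0, E[F(C)] < 2^{N(H(p)+ε−1)}, using that Pr[c ∈ C] = 1/(2^N+1) < 2^{−N} for each fixed nonzero c and that |T(ε)| < 2^{N(H(p)+ε)} with q_m > 2^{−N(H(p)+ε)}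 on T(ε). -/
open scoped Classical

instance (N : ℕ) : Finite (Submodule (ZMod 2) (V N)) :=
  Finite.of_injective (fun C => (C : Set (V N))) SetLike.coe_injective

noncomputable instance (N : ℕ) :
    Fintype {C : Submodule (ZMod 2) (V N) // C = sympDual C} :=
  Fintype.ofFinite _


namespace Stmt18Aux

variable {N : ℕ}

lemma symp_comm (u v : V N) : symp u v = symp v u :=
  Finset.sum_congr rfl fun n _ => by ring

lemma symp_add_left (a b v : V N) : symp (a + b) v = symp a v + symp b v := by
  simp only [symp, ← Finset.sum_add_distrib]
  refine Finset.sum_congr rfl fun n _ => ?_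
  simp [Prod.fst_add, Prod.snd_add]; ring

lemma symp_smul_left (c : ZMod 2) (a v : V N) : symp (c • a) v = c * symp a v := by
  simp only [symp, Finset.mul_sum]
  refine Finset.sum_congr rfl fun n _ => ?_
  simp [Prod.smul_fst, Prod.smul_snd, smul_eq_mul]; ring

lemma symp_add_right (a b v : V N) : symp v (a + b) = symp v a + symp v b := by
  rw [symp_comm, symp_add_left, symp_comm a v, symp_comm b v]

lemma symp_smul_right (c : ZMod 2) (a v : V N) : symp v (c • a) = c * symp v a := by
  rw [symp_comm, symp_smul_left, symp_comm a v]

lemma symp_self (v : V N) : symp v v = 0 :=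
  Finset.sum_eq_zero fun n _ => (by decide : ∀ a b : ZMod 2, a * b + b * a = 0) _ _

lemma addself (w : V N) : w + w = 0 := by
  rw [← two_smul (ZMod 2) w, (by decide : (2 : ZMod 2) = 0), zero_smul]

/-- symp as a bilinear form. -/
def sympBilin (N : ℕ) : LinearMap.BilinForm (ZMod 2) (V N) :=
  LinearMap.mk₂ (ZMod 2) symp symp_add_left symp_smul_left
    (fun m n₁ n₂ => symp_add_right n₁ n₂ m) (fun c m n => symp_smul_right c n m)

@[simp] lemma sympBilin_apply (u v : V N) : sympBilin N u v = symp u v := rfl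

lemma symp_exists_one {u : V N} (hu : u ≠ 0) : ∃ v, symp u v = 1 := by
  obtain ⟨n, hn⟩ : ∃ n, u n ≠ 0 := by
    by_contra h'; push_neg at h'; exact hu (funext h')
  obtain ⟨w, hw⟩ := (by decide : ∀ z : F4, z ≠ 0 → ∃ w : F4, z.1 * w.2 + z.2 * w.1 = 1) _ hn
  refine ⟨Function.update (0 : V N) n w, ?_⟩
  unfold symp
  rw [Finset.sum_eq_single n]
  · rw [Function.update_self, hw]
  · intro b _ hb; rw [Function.update_of_ne hb]; simp
  · simp

lemma sympBilin_nondeg : (sympBilin N).Nondegenerate := by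
  constructor
  · intro u hu
    by_contra h
    obtain ⟨v, hv⟩ := symp_exists_one h
    have := hu v
    rw [sympBilin_apply, hv] at this
    exact one_ne_zero this
  · intro u hu
    by_contra h
    obtain ⟨v, hv⟩ := symp_exists_one h
    have := hu v
    rw [sympBilin_apply, symp_comm, hv] at this
    exact one_ne_zero this

lemma sympBilin_refl : (sympBilin N).IsRefl := by
  intro x y h
  rw [sympBilin_apply] at h ⊢
  rw [symp_comm]; exact h

lemma sympDual_eq_orthogonal (C : Submodule (ZMod 2) (V N)) :
    sympDual C = (sympBilin N).orthogonal C := by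
  ext u
  constructor
  · intro h v hv
    have := h v hv
    change symp v u = 0; rwa [symp_comm]
  · intro h v hv
    have := h v hv
    change symp v u = 0 at this; rwa [symp_comm] at this

lemma finrank_V : Module.finrank (ZMod 2) (V N) = 2 * N := by
  simp [Module.finrank_pi_fintype, Module.finrank_prod, Finset.sum_const, mul_comm]

lemma finrank_selfdual {C : Submodule (ZMod 2) (V N)} (hC : C = sympDual C) :
    Module.finrank (ZMod 2) C = N := by
  have h1 := LinearMap.BilinForm.finrank_orthogonal (B := sympBilin N)
      sympBilin_nondeg C
  rw [← sympDual_eq_orthogonal, ← hC, finrank_V] at h1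
  have h2 : Module.finrank (ZMod 2) C ≤ 2 * N := by
    rw [← finrank_V]; exact Submodule.finrank_le C
  omega


/-- Symplectic transvection `x ↦ x + (x ⊙ v) v` (an involution in characteristic 2). -/
def tvL (v : V N) : V N →ₗ[ZMod 2] V N where
  toFun x := x + symp x v • v
  map_add' a b := by
    rw [symp_add_left, add_smul]; abel
  map_smul' c a := by
    rw [symp_smul_left, mul_smul, smul_add]; rfl

lemma tvL_apply (v x : V N) : tvL v x = x + symp x v • v := rfl

lemma tvL_tvL (v x : V N) : tvL v (tvL v x) = x := by
  rw [tvL_apply, tvL_apply, symp_add_left, symp_smul_left, symp_self, mul_zero, add_zero,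
    add_assoc, ← add_smul, (by decide : ∀ t : ZMod 2, t + t = 0) (symp x v), zero_smul, add_zero]

/-- Symplectic transvection as a linear equivalence. -/
def tvE (v : V N) : V N ≃ₗ[ZMod 2] V N :=
  LinearEquiv.ofLinear (tvL v) (tvL v) (LinearMap.ext (tvL_tvL v)) (LinearMap.ext (tvL_tvL v))

lemma tvE_apply (v x : V N) : tvE v x = x + symp x v • v := rfl

lemma tvE_symp (v x y : V N) : symp (tvE v x) (tvE v y) = symp x y := by
  rw [tvE_apply, tvE_apply, symp_add_left, symp_add_right, symp_add_right, symp_smul_left,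
    symp_smul_left, symp_smul_right, symp_smul_right, symp_self, mul_zero, mul_zero, add_zero,
    symp_comm v y, mul_comm (symp y v) (symp x v), add_assoc,
    (by decide : ∀ t : ZMod 2, t + t = 0) (symp x v * symp y v), add_zero]

lemma tvE_maps (u w : V N) (h : symp u w = 1) : tvE (u + w) u = w := by
  rw [tvE_apply, symp_add_right, symp_self, zero_add, h, one_smul, ← add_assoc, addself,
    zero_add]

lemma zmod2_cases (t : ZMod 2) : t = 0 ∨ t = 1 := by revert t; decide

lemma exists_symplectic {c d : V N} (hc : c ≠ 0) (hd : d ≠ 0) :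
    ∃ g : V N ≃ₗ[ZMod 2] V N, (∀ x y, symp (g x) (g y) = symp x y) ∧ g c = d := by
  rcases zmod2_cases (symp c d) with h0 | h1
  · obtain ⟨a, ha⟩ := symp_exists_one hc
    obtain ⟨b, hb⟩ := symp_exists_one hd
    obtain ⟨v, hcv, hdv⟩ : ∃ v, symp c v = 1 ∧ symp d v = 1 := by
      rcases zmod2_cases (symp d a) with hda | hda
      · rcases zmod2_cases (symp c b) with hcb | hcb
        · exact ⟨a + b, by rw [symp_add_right, ha, hcb, add_zero], by
            rw [symp_add_right, hda, hb, zero_add]⟩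
        · exact ⟨b, hcb, hb⟩
      · exact ⟨a, ha, hda⟩
    refine ⟨(tvE (c + v)).trans (tvE (v + d)), fun x y => by
      rw [LinearEquiv.trans_apply, LinearEquiv.trans_apply, tvE_symp, tvE_symp], ?_⟩
    rw [LinearEquiv.trans_apply, tvE_maps c v hcv, tvE_maps v d (by rw [symp_comm]; exact hdv)]
  · exact ⟨tvE (c + d), tvE_symp _, tvE_maps c d h1⟩

section Transport

variable (g : V N ≃ₗ[ZMod 2] V N)

lemma map_sympDual (hg : ∀ x y, symp (g x) (g y) = symp x y) (C : Submodule (ZMod 2) (V N)) :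
    Submodule.map (g : V N →ₗ[ZMod 2] V N) (sympDual C) =
      sympDual (Submodule.map (g : V N →ₗ[ZMod 2] V N) C) := by
  ext u
  rw [Submodule.mem_map_equiv]
  constructor
  · intro h w hw
    rw [Submodule.mem_map] at hw
    obtain ⟨v, hv, rfl⟩ := hw
    have := h v hv
    rw [← hg (g.symm u) v, g.apply_symm_apply] at this
    exact this
  · intro h v hv
    have := h (g v) (Submodule.mem_map_of_mem hv)
    rw [← g.apply_symm_apply u, hg] at this
    exact this

lemma map_selfdual (hg : ∀ x y, symp (g x) (g y) = symp x y)
    {C : Submodule (ZMod 2) (V N)} (hC : C = sympDual C) :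
    Submodule.map (g : V N →ₗ[ZMod 2] V N) C =
      sympDual (Submodule.map (g : V N →ₗ[ZMod 2] V N) C) := by
  conv_lhs => rw [hC]
  exact map_sympDual g hg C

end Transport


section Counting

/-- The type of symplectic self-dual subspaces. -/
abbrev SD (N : ℕ) := {C : Submodule (ZMod 2) (V N) // C = sympDual C}

/-- The number of self-dual subspaces containing a given vector. -/
noncomputable def nC (N : ℕ) (c : V N) : ℕ :=
  (Finset.univ.filter (fun C : SD N => c ∈ C.1)).card

/-- A symplectic equivalence induces a bijection on self-dual subspaces. -/
noncomputable def sdEquiv (g : V N ≃ₗ[ZMod 2] V N)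
    (hg : ∀ x y, symp (g x) (g y) = symp x y) : SD N ≃ SD N where
  toFun C := ⟨Submodule.map (g : V N →ₗ[ZMod 2] V N) C.1, map_selfdual g hg C.2⟩
  invFun C := ⟨Submodule.map (g.symm : V N →ₗ[ZMod 2] V N) C.1,
    map_selfdual g.symm (fun x y => by
      rw [← hg (g.symm x) (g.symm y), g.apply_symm_apply, g.apply_symm_apply]) C.2⟩
  left_inv C := Subtype.ext (by
    ext x
    simp [Submodule.mem_map_equiv])
  right_inv C := Subtype.ext (by
    ext x
    simp [Submodule.mem_map_equiv])

lemma nC_eq {c d : V N} (hc : c ≠ 0) (hd : d ≠ 0) : nC N c = nC N d := by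
  obtain ⟨g, hg, hgc⟩ := exists_symplectic hc hd
  refine Finset.card_equiv (sdEquiv g hg) fun C => ?_
  simp only [Finset.mem_filter, Finset.mem_univ, true_and, sdEquiv, Equiv.coe_fn_mk]
  rw [Submodule.mem_map_equiv, ← hgc, g.symm_apply_apply]

lemma card_V : Fintype.card (V N) = 2 ^ N * 2 ^ N := by
  rw [← mul_pow]
  simp [Fintype.card_fun]

lemma card_filter_mem (C : SD N) :
    (Finset.univ.filter (fun c : V N => c ∈ C.1)).card = 2 ^ N := by
  have h1 : Fintype.card C.1 = 2 ^ Module.finrank (ZMod 2) C.1 := by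
    have := Module.card_eq_pow_finrank (K := ZMod 2) (V := C.1)
    rwa [ZMod.card] at this
  rw [finrank_selfdual C.2] at h1
  rw [← h1]
  exact (Fintype.card_subtype _).symm

lemma inner_count (C : SD N) :
    ∑ x ∈ Finset.univ.filter (fun c : V N => c ≠ 0), (if x ∈ C.1 then 1 else 0) = 2 ^ N - 1 := by
  rw [← Finset.card_filter]
  have h : (Finset.univ.filter (fun c : V N => c ≠ 0)).filter (fun c => c ∈ C.1) =
      (Finset.univ.filter (fun c : V N => c ∈ C.1)).erase 0 := by
    ext x
    simp [Finset.mem_erase, and_comm]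
  rw [h, Finset.card_erase_of_mem (by simp [C.1.zero_mem]), card_filter_mem]

lemma double_count :
    ∑ c ∈ Finset.univ.filter (fun c : V N => c ≠ 0), nC N c =
      Fintype.card (SD N) * (2 ^ N - 1) := by
  unfold nC
  simp only [Finset.card_filter]
  rw [Finset.sum_comm]
  rw [Finset.sum_congr rfl (fun C _ => inner_count C), Finset.sum_const, smul_eq_mul,
    Finset.card_univ]

lemma nC_real (c : V N) : ((nC N c : ℕ) : ℝ) = ∑ C : SD N, (if c ∈ C.1 then (1:ℝ) else 0) := by
  rw [nC]
  exact (Finset.sum_boole _ _).symm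

lemma nonzero_card :
    (Finset.univ.filter (fun c : V N => c ≠ 0)).card = 2 ^ N * 2 ^ N - 1 := by
  rw [Finset.filter_ne', Finset.card_erase_of_mem (Finset.mem_univ 0), Finset.card_univ, card_V]

lemma nC_mul_le (hN : 0 < N) {c : V N} (hc : c ≠ 0) :
    nC N c * 2 ^ N ≤ Fintype.card (SD N) := by
  have hconst : ∀ c' ∈ Finset.univ.filter (fun c' : V N => c' ≠ 0), nC N c' = nC N c :=
    fun c' hc' => nC_eq (Finset.mem_filter.mp hc').2 hc
  have hsum := double_count (N := N)
  rw [Finset.sum_congr rfl hconst, Finset.sum_const, smul_eq_mul, nonzero_card] at hsum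
  have h2 : 2 ≤ 2 ^ N := by
    calc 2 = 2 ^ 1 := rfl
    _ ≤ 2 ^ N := Nat.pow_le_pow_right (by norm_num) hN
  obtain ⟨k, hk⟩ : ∃ k, 2 ^ N = k + 2 := ⟨2 ^ N - 2, by omega⟩
  rw [hk] at hsum ⊢
  have hfact : (k + 2) * (k + 2) - 1 = (k + 1) * (k + 3) := by
    have h : (k + 1) * (k + 3) + 1 = (k + 2) * (k + 2) := by ring
    rw [← h, Nat.add_sub_cancel]
  rw [hfact, show k + 2 - 1 = k + 1 from rfl] at hsum
  have hteq : nC N c * (k + 3) = Fintype.card (SD N) := by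
    refine Nat.eq_of_mul_eq_mul_left (Nat.succ_pos k) ?_
    calc (k + 1) * (nC N c * (k + 3)) = (k + 1) * (k + 3) * nC N c := by ring
    _ = Fintype.card (SD N) * (k + 1) := hsum
    _ = (k + 1) * Fintype.card (SD N) := by ring
  calc nC N c * (k + 2) ≤ nC N c * (k + 3) := Nat.mul_le_mul_left _ (by omega)
  _ = Fintype.card (SD N) := hteq

lemma qprod_pos {p : F4 → ℝ} (hpos : ∀ x, 0 < p x) (m : Fin N → F4) : 0 < qprod p m :=
  Finset.prod_pos fun n _ => hpos _

lemma qprod_total {p : F4 → ℝ} (hsum : ∑ x, p x = 1) :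
    ∑ m : Fin N → F4, qprod p m = 1 := by
  have h := Finset.prod_univ_sum (fun _ : Fin N => (Finset.univ : Finset F4)) (fun _ x => p x)
  rw [Fintype.piFinset_univ] at h
  calc ∑ m : Fin N → F4, qprod p m = ∏ _i : Fin N, ∑ x : F4, p x := h.symm
  _ = 1 := by rw [hsum]; simp

end Counting

end Stmt18Aux

/-- with `H(p) < 1` and `Δ > 0`, if a symplectic self-dual subspace
`C ⊆ F_2^{2N}` is chosen uniformly at random and
`F(C) = ∑_{m ∈ T(ε)} q_m · 1[∃ m' ≠ m, q_{m'} ≥ q_m ∧ m + m' ∈ C]`,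
then for any `ε > 0`, `E[F(C)] < 2^{N(H(p)+ε−1)}`. -/
theorem stmt18 (N : ℕ) (p : F4 → ℝ) (hpos : ∀ x, 0 < p x) (hsum : ∑ x, p x = 1)
    (hH : H4 p < 1) (hΔ : 0 < Δ4 p) (ε : ℝ) (hε : 0 < ε) :
    (∑ C : {C : Submodule (ZMod 2) (V N) // C = sympDual C},
        ∑ m ∈ typFinset N p ε,
          (if ∃ m', m' ≠ m ∧ qprod p m ≤ qprod p m' ∧ m + m' ∈ C.1
            then qprod p m else 0)) /
      (Nat.card {C : Submodule (ZMod 2) (V N) // C = sympDual C} : ℝ) <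
      (2 : ℝ) ^ ((N : ℝ) * (H4 p + ε - 1)) := by
  classical
  have hR : (0:ℝ) < (2 : ℝ) ^ ((N : ℝ) * (H4 p + ε - 1)) := Real.rpow_pos_of_pos two_pos _
  rw [Nat.card_eq_fintype_card]
  have hite : ∀ (P : Prop) [Decidable P], (0:ℝ) ≤ if P then 1 else 0 := fun P _ => by
    split <;> norm_num
  rcases Nat.eq_zero_or_pos N with hN | hN
  · subst hN
    have hz : ∀ C : Stmt18Aux.SD 0,
        ∑ m ∈ typFinset 0 p ε,
          (if ∃ m', m' ≠ m ∧ qprod p m ≤ qprod p m' ∧ m + m' ∈ C.1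
            then qprod p m else 0) = 0 := by
      intro C
      refine Finset.sum_eq_zero fun m _ => if_neg ?_
      rintro ⟨m', hm', -⟩
      exact hm' (funext fun i => i.elim0)
    rw [Finset.sum_eq_zero fun C _ => hz C, zero_div]
    exact hR
  rcases eq_or_ne (Fintype.card (Stmt18Aux.SD N)) 0 with ht0 | ht0
  · rw [ht0, Nat.cast_zero, div_zero]
    exact hR
  rcases (typFinset N p ε).eq_empty_or_nonempty with hTe | hTne
  · rw [hTe]
    simp only [Finset.sum_empty, Finset.sum_const_zero, zero_div]
    exact hR
  have hKpos : (0:ℝ) < 2 ^ N := by positivity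
  have htpos : (0:ℝ) < (Fintype.card (Stmt18Aux.SD N) : ℝ) :=
    Nat.cast_pos.mpr (Nat.pos_of_ne_zero ht0)
  -- the main counting bound on the numerator
  have hNum : (∑ C : {C : Submodule (ZMod 2) (V N) // C = sympDual C},
        ∑ m ∈ typFinset N p ε,
          (if ∃ m', m' ≠ m ∧ qprod p m ≤ qprod p m' ∧ m + m' ∈ C.1
            then qprod p m else 0)) ≤
      ((typFinset N p ε).card : ℝ) *
        ((Fintype.card (Stmt18Aux.SD N) : ℝ) / 2 ^ N) := by
    have step1 : ∀ (C : Stmt18Aux.SD N) (m : Fin N → F4),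
        (if ∃ m', m' ≠ m ∧ qprod p m ≤ qprod p m' ∧ m + m' ∈ C.1
            then qprod p m else 0) ≤
          ∑ m' ∈ Finset.univ.filter (fun m' => m' ≠ m ∧ qprod p m ≤ qprod p m'),
            qprod p m * (if m + m' ∈ C.1 then (1:ℝ) else 0) := by
      intro C m
      by_cases h : ∃ m', m' ≠ m ∧ qprod p m ≤ qprod p m' ∧ m + m' ∈ C.1
      · obtain ⟨m', h1, h2, h3⟩ := h
        have hex : ∃ m'', m'' ≠ m ∧ qprod p m ≤ qprod p m'' ∧ m + m'' ∈ C.1 :=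
          ⟨m', h1, h2, h3⟩
        rw [if_pos hex]
        have hs := Finset.single_le_sum
          (f := fun m'' => qprod p m * (if m + m'' ∈ C.1 then (1:ℝ) else 0))
          (s := Finset.univ.filter (fun m'' => m'' ≠ m ∧ qprod p m ≤ qprod p m''))
          (fun i _ => mul_nonneg (Stmt18Aux.qprod_pos hpos m).le (hite _))
          (Finset.mem_filter.mpr ⟨Finset.mem_univ m', h1, h2⟩)
        simp only [if_pos h3, mul_one] at hs
        exact hs
      · rw [if_neg h]
        exact Finset.sum_nonneg fun i _ =>
          mul_nonneg (Stmt18Aux.qprod_pos hpos m).le (hite _)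
    have hSm : ∀ m : Fin N → F4,
        (((Finset.univ.filter
            (fun m' => m' ≠ m ∧ qprod p m ≤ qprod p m')).card : ℝ)) * qprod p m ≤ 1 := by
      intro m
      calc (((Finset.univ.filter
            (fun m' => m' ≠ m ∧ qprod p m ≤ qprod p m')).card : ℝ)) * qprod p m
          = ∑ _m' ∈ Finset.univ.filter (fun m' => m' ≠ m ∧ qprod p m ≤ qprod p m'),
              qprod p m := by rw [Finset.sum_const, nsmul_eq_mul]
        _ ≤ ∑ m' ∈ Finset.univ.filter (fun m' => m' ≠ m ∧ qprod p m ≤ qprod p m'),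
              qprod p m' := Finset.sum_le_sum fun m' hm' => (Finset.mem_filter.mp hm').2.2
        _ ≤ ∑ m' : Fin N → F4, qprod p m' :=
            Finset.sum_le_sum_of_subset_of_nonneg (Finset.subset_univ _)
              (fun i _ _ => (Stmt18Aux.qprod_pos hpos i).le)
        _ = 1 := Stmt18Aux.qprod_total hsum
    have step4 : ∀ m ∈ typFinset N p ε,
        ∑ m' ∈ Finset.univ.filter (fun m' => m' ≠ m ∧ qprod p m ≤ qprod p m'),
            qprod p m * ((Stmt18Aux.nC N (m + m') : ℕ) : ℝ) ≤
          (Fintype.card (Stmt18Aux.SD N) : ℝ) / 2 ^ N := by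
      intro m _
      have hb : ∀ m' ∈ Finset.univ.filter (fun m' => m' ≠ m ∧ qprod p m ≤ qprod p m'),
          qprod p m * ((Stmt18Aux.nC N (m + m') : ℕ) : ℝ) ≤
            qprod p m * ((Fintype.card (Stmt18Aux.SD N) : ℝ) / 2 ^ N) := by
        intro m' hm'
        obtain ⟨-, h1, -⟩ := Finset.mem_filter.mp hm'
        have hne : m + m' ≠ 0 := by
          intro h0
          apply h1
          calc m' = m + (m + m') := by rw [← add_assoc, Stmt18Aux.addself, zero_add]
            _ = m + 0 := by rw [h0]
            _ = m := add_zero m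
        have hcount := Stmt18Aux.nC_mul_le hN hne
        have hcast : ((Stmt18Aux.nC N (m + m') : ℕ) : ℝ) * 2 ^ N ≤
            (Fintype.card (Stmt18Aux.SD N) : ℝ) := by exact_mod_cast hcount
        exact mul_le_mul_of_nonneg_left ((le_div_iff₀ hKpos).mpr hcast)
          (Stmt18Aux.qprod_pos hpos m).le
      calc ∑ m' ∈ Finset.univ.filter (fun m' => m' ≠ m ∧ qprod p m ≤ qprod p m'),
            qprod p m * ((Stmt18Aux.nC N (m + m') : ℕ) : ℝ)
          ≤ ∑ _m' ∈ Finset.univ.filter (fun m' => m' ≠ m ∧ qprod p m ≤ qprod p m'),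
            qprod p m * ((Fintype.card (Stmt18Aux.SD N) : ℝ) / 2 ^ N) :=
            Finset.sum_le_sum hb
        _ = (((Finset.univ.filter
              (fun m' => m' ≠ m ∧ qprod p m ≤ qprod p m')).card : ℝ) * qprod p m) *
            ((Fintype.card (Stmt18Aux.SD N) : ℝ) / 2 ^ N) := by
            rw [Finset.sum_const, nsmul_eq_mul]; ring
        _ ≤ 1 * ((Fintype.card (Stmt18Aux.SD N) : ℝ) / 2 ^ N) :=
            mul_le_mul_of_nonneg_right (hSm m) (by positivity)
        _ = (Fintype.card (Stmt18Aux.SD N) : ℝ) / 2 ^ N := one_mul _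
    calc (∑ C : {C : Submodule (ZMod 2) (V N) // C = sympDual C},
        ∑ m ∈ typFinset N p ε,
          (if ∃ m', m' ≠ m ∧ qprod p m ≤ qprod p m' ∧ m + m' ∈ C.1
            then qprod p m else 0))
        ≤ ∑ C : Stmt18Aux.SD N, ∑ m ∈ typFinset N p ε,
            ∑ m' ∈ Finset.univ.filter (fun m' => m' ≠ m ∧ qprod p m ≤ qprod p m'),
              qprod p m * (if m + m' ∈ C.1 then (1:ℝ) else 0) :=
          Finset.sum_le_sum fun C _ => Finset.sum_le_sum fun m _ => step1 C m
      _ = ∑ m ∈ typFinset N p ε,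
            ∑ m' ∈ Finset.univ.filter (fun m' => m' ≠ m ∧ qprod p m ≤ qprod p m'),
              qprod p m * ((Stmt18Aux.nC N (m + m') : ℕ) : ℝ) := by
          rw [Finset.sum_comm]
          refine Finset.sum_congr rfl fun m _ => ?_
          rw [Finset.sum_comm]
          refine Finset.sum_congr rfl fun m' _ => ?_
          rw [← Finset.mul_sum, ← Stmt18Aux.nC_real]
      _ ≤ ∑ _m ∈ typFinset N p ε, (Fintype.card (Stmt18Aux.SD N) : ℝ) / 2 ^ N :=
          Finset.sum_le_sum step4
      _ = ((typFinset N p ε).card : ℝ) *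
            ((Fintype.card (Stmt18Aux.SD N) : ℝ) / 2 ^ N) := by
          rw [Finset.sum_const, nsmul_eq_mul]
  -- the typical-set cardinality bound
  have hTlt : ((typFinset N p ε).card : ℝ) < (2:ℝ) ^ ((N : ℝ) * (H4 p + ε)) := by
    have hqm : ∀ m ∈ typFinset N p ε,
        (2:ℝ) ^ (-((N : ℝ) * (H4 p + ε))) < qprod p m := by
      intro m hm
      rw [typFinset, Finset.mem_filter] at hm
      have habs := (abs_lt.mp hm.2).2
      have hNr : (0:ℝ) < N := Nat.cast_pos.mpr hN
      have hL : -((N : ℝ) * (H4 p + ε)) < Real.logb 2 (qprod p m) := by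
        have h1 : -(1 / (N:ℝ)) * Real.logb 2 (qprod p m) < H4 p + ε := by linarith
        have h2 := mul_lt_mul_of_pos_left h1 hNr
        have h3 : (N:ℝ) * (-(1 / (N:ℝ)) * Real.logb 2 (qprod p m)) =
            -Real.logb 2 (qprod p m) := by field_simp
        rw [h3] at h2
        linarith
      calc (2:ℝ) ^ (-((N : ℝ) * (H4 p + ε)))
          < (2:ℝ) ^ Real.logb 2 (qprod p m) :=
            (Real.rpow_lt_rpow_left_iff one_lt_two).mpr hL
        _ = qprod p m := Real.rpow_logb two_pos (by norm_num) (Stmt18Aux.qprod_pos hpos m)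
    have hlt := Finset.sum_lt_sum_of_nonempty hTne hqm
    rw [Finset.sum_const, nsmul_eq_mul] at hlt
    have hle1 : ∑ m ∈ typFinset N p ε, qprod p m ≤ 1 := by
      rw [← Stmt18Aux.qprod_total (N := N) hsum]
      exact Finset.sum_le_sum_of_subset_of_nonneg (Finset.subset_univ _)
        (fun i _ _ => (Stmt18Aux.qprod_pos hpos i).le)
    have hfin : ((typFinset N p ε).card : ℝ) * (2:ℝ) ^ (-((N : ℝ) * (H4 p + ε))) < 1 :=
      lt_of_lt_of_le hlt hle1
    have h2a : (0:ℝ) < (2:ℝ) ^ ((N : ℝ) * (H4 p + ε)) := Real.rpow_pos_of_pos two_pos _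
    rw [Real.rpow_neg (by norm_num : (0:ℝ) ≤ 2)] at hfin
    calc ((typFinset N p ε).card : ℝ)
        = ((typFinset N p ε).card : ℝ) * ((2:ℝ) ^ ((N : ℝ) * (H4 p + ε)))⁻¹ *
          (2:ℝ) ^ ((N : ℝ) * (H4 p + ε)) := by field_simp
      _ < 1 * (2:ℝ) ^ ((N : ℝ) * (H4 p + ε)) := mul_lt_mul_of_pos_right hfin h2a
      _ = (2:ℝ) ^ ((N : ℝ) * (H4 p + ε)) := one_mul _
  calc (∑ C : {C : Submodule (ZMod 2) (V N) // C = sympDual C},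
        ∑ m ∈ typFinset N p ε,
          (if ∃ m', m' ≠ m ∧ qprod p m ≤ qprod p m' ∧ m + m' ∈ C.1
            then qprod p m else 0)) / (Fintype.card (Stmt18Aux.SD N) : ℝ)
      ≤ ((typFinset N p ε).card : ℝ) / 2 ^ N := by
        rw [div_le_iff₀ htpos]
        calc (∑ C : {C : Submodule (ZMod 2) (V N) // C = sympDual C},
            ∑ m ∈ typFinset N p ε,
              (if ∃ m', m' ≠ m ∧ qprod p m ≤ qprod p m' ∧ m + m' ∈ C.1
                then qprod p m else 0))
            ≤ ((typFinset N p ε).card : ℝ) *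
              ((Fintype.card (Stmt18Aux.SD N) : ℝ) / 2 ^ N) := hNum
          _ = ((typFinset N p ε).card : ℝ) / 2 ^ N *
              (Fintype.card (Stmt18Aux.SD N) : ℝ) := by ring
    _ < (2:ℝ) ^ ((N : ℝ) * (H4 p + ε)) / 2 ^ N := by gcongr
    _ = (2 : ℝ) ^ ((N : ℝ) * (H4 p + ε - 1)) := by
        rw [show ((2:ℝ) ^ N : ℝ) = (2:ℝ) ^ ((N : ℕ) : ℝ) from (Real.rpow_natCast 2 N).symm,
          ← Real.rpow_sub two_pos]
        congr 1
        ring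
end
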